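/- arXiv:1512.02179 — 4 statements merged into one kernel-verified Lean document; each statement's English description precedes it below -/
import Mathlib

section
/- Let T be a rooted finite tree with q leaves and let γ be an integer with 2 ≤ γ ≤ q. Then the γ-height of the root of T is at most log_γ(q), i.e., γ^(height_γ(T)) ≤ q. -/
/-- A finite rooted tree: a node together with a (possibly empty) list of subtrees. -/
inductive RTree : Type where
  | node : List RTree → RTree

namespace RTree

/-- Number of leaves of a rooted tree (a node with no children is a leaf). -/
def numLeaves : RTree → ℕ
  | node [] => 1
  | node (t :: ts) => ((t :: ts).attach.map (fun x => numLeaves x.1)).sum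
termination_by t => sizeOf t
decreasing_by
  have h := List.sizeOf_lt_of_mem x.2
  simp only [RTree.node.sizeOf_spec, List.cons.sizeOf_spec] at h ⊢
  omega

/-- The γ-height of a rooted tree: leaves have γ-height 0; for an internal node
whose children's γ-heights have maximum `g`, the γ-height is `g+1` if at least γ
children have γ-height exactly `g`, and `g` otherwise. -/
def gheight (γ : ℕ) : RTree → ℕ
  | node [] => 0
  | node (t :: ts) =>
    let hs := ((t :: ts).attach.map (fun x => gheight γ x.1))
    let g := hs.foldr max 0
    if γ ≤ (hs.filter (fun h => h = g)).length then g + 1 else g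
termination_by t => sizeOf t
decreasing_by
  have h := List.sizeOf_lt_of_mem x.2
  simp only [RTree.node.sizeOf_spec, List.cons.sizeOf_spec] at h ⊢
  omega


lemma list_foldr_max_mem : ∀ (l : List ℕ), l ≠ [] → l.foldr max 0 ∈ l
  | [a], _ => by simp
  | a :: b :: l, _ => by
    have ih := list_foldr_max_mem (b :: l) (by simp)
    show max a ((b :: l).foldr max 0) ∈ a :: b :: l
    rcases max_cases a ((b :: l).foldr max 0) with ⟨h, _⟩ | ⟨h, _⟩ <;> rw [h]
    · exact List.mem_cons_self
    · exact List.mem_cons_of_mem _ ih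

lemma count_mul_le_sum {α : Type*} : ∀ (L : List α) (f h : α → ℕ) (g B : ℕ),
    (∀ x ∈ L, h x = g → B ≤ f x) →
    ((L.map h).filter (fun v => v = g)).length * B ≤ (L.map f).sum
  | [], _, _, _, _, _ => by simp
  | a :: L, f, h, g, B, H => by
    have ih := count_mul_le_sum L f h g B (fun x hx => H x (List.mem_cons_of_mem _ hx))
    by_cases hc : h a = g
    · have hfa := H a List.mem_cons_self hc
      simp only [List.map_cons, List.filter_cons, hc, List.sum_cons, decide_true,
        if_true, List.length_cons]
      nlinarith
    · simp only [List.map_cons, List.filter_cons, List.sum_cons, decide_eq_true_eq,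
        hc, if_false]
      omega

theorem pow_gheight_le (γ : ℕ) : ∀ t : RTree, γ ^ gheight γ t ≤ numLeaves t
  | node [] => by rw [gheight, numLeaves]; simp
  | node (t :: ts) => by
    have ih : ∀ x : {x // x ∈ t :: ts}, γ ^ gheight γ x.1 ≤ numLeaves x.1 :=
      fun x => pow_gheight_le γ x.1
    rw [gheight, numLeaves]
    set hs := ((t :: ts).attach.map (fun x => gheight γ x.1)) with hhs
    set g := hs.foldr max 0 with hg
    split
    · next hc =>
      have key := count_mul_le_sum (t :: ts).attach (fun x => numLeaves x.1)
        (fun x => gheight γ x.1) g (γ ^ g)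
        (fun x _ hx => hx ▸ ih x)
      calc γ ^ (g + 1) = γ * γ ^ g := by ring
        _ ≤ (hs.filter (fun v => v = g)).length * γ ^ g :=
            Nat.mul_le_mul_right _ hc
        _ ≤ _ := key
    · next hc =>
      have hne : hs ≠ [] := by
        simp [hhs]
      obtain ⟨x, hxmem, hxg⟩ := List.mem_map.mp (list_foldr_max_mem hs hne)
      calc γ ^ g = γ ^ gheight γ x.1 := by rw [hxg]
        _ ≤ numLeaves x.1 := ih x
        _ ≤ _ := List.single_le_sum (fun _ _ => Nat.zero_le _) _
              (List.mem_map_of_mem (f := fun x : {x // x ∈ t :: ts} => numLeaves x.1) hxmem)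
termination_by t => sizeOf t
decreasing_by
  have h := List.sizeOf_lt_of_mem x.2
  simp only [RTree.node.sizeOf_spec, List.cons.sizeOf_spec] at h ⊢
  omega

end RTree

/-- If the tree `t` has `q` leaves and `2 ≤ γ ≤ q`, then the γ-height of (the root of) `t`
is at most `log_γ q`, i.e. `γ ^ height_γ(t) ≤ q`. -/
theorem gamma_height_le_log (γ : ℕ) (t : RTree) (hγ2 : 2 ≤ γ)
    (hγq : γ ≤ RTree.numLeaves t) :
    γ ^ RTree.gheight γ t ≤ RTree.numLeaves t :=
  RTree.pow_gheight_le γ t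
end

section
/- For every n ≥ 2 and every k with 1 ≤ k ≤ n, there exists a family S̄ = (S_1, ..., S_m) of subsets of {0,1,...,n-1} with m ≤ C·k²·log n (for some absolute constant C) such that for every subset A ⊆ {0,...,n-1} with |A| ≤ k and every a ∈ A, there exists an index i with S_i ∩ A = {a}. -/
section StrongSelectorAux
open Finset

private lemma count_good (n k : ℕ) [NeZero k] (A : Finset (Fin n)) (a : Fin n) (ha : a ∈ A) :
    (Finset.univ.filter (fun g : Fin n → Fin k => g a = 0 ∧ ∀ b ∈ A, b ≠ a → g b ≠ 0)).card
      = (k-1)^(A.card - 1) * k^(n - A.card) := by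
  classical
  have hEq : Finset.univ.filter (fun g : Fin n → Fin k => g a = 0 ∧ ∀ b ∈ A, b ≠ a → g b ≠ 0)
      = Fintype.piFinset (fun x => if x = a then {0} else if x ∈ A then {(0:Fin k)}ᶜ else Finset.univ) := by
    ext g
    simp only [Finset.mem_filter, Fintype.mem_piFinset, Finset.mem_univ, true_and]
    constructor
    · rintro ⟨h0, h1⟩ x
      by_cases hx : x = a
      · subst hx; simp [h0]
      · by_cases hxA : x ∈ A
        · simp [hx, hxA, h1 x hxA hx]
        · simp [hx, hxA]
    · intro h
      refine ⟨by simpa using h a, fun b hb hba => ?_⟩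
      have := h b
      simp [hba, hb] at this
      exact this
  rw [hEq, Fintype.card_piFinset]
  rw [← Finset.prod_mul_prod_compl A]
  have h1 : ∀ x ∈ A, (if x = a then ({0}:Finset (Fin k)) else if x ∈ A then {0}ᶜ else Finset.univ).card
      = if x = a then 1 else k - 1 := by
    intro x hx
    by_cases hxa : x = a
    · simp [hxa]
    · simp [hxa, hx, Finset.card_compl]
  have h2 : ∀ x ∈ Aᶜ, (if x = a then ({0}:Finset (Fin k)) else if x ∈ A then {0}ᶜ else Finset.univ).card = k := by
    intro x hx
    rw [Finset.mem_compl] at hx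
    have hxa : x ≠ a := fun h => hx (h ▸ ha)
    simp [hxa, hx]
  rw [Finset.prod_congr rfl h1, Finset.prod_congr rfl h2]
  rw [Finset.prod_const, Finset.card_compl, Fintype.card_fin]
  rw [← Finset.mul_prod_erase A _ ha]
  simp only [if_pos rfl, one_mul]
  have h3 : ∀ x ∈ A.erase a, (if x = a then 1 else k - 1) = k - 1 := by
    intro x hx
    simp [Finset.ne_of_mem_erase hx]
  rw [Finset.prod_congr rfl h3, Finset.prod_const, Finset.card_erase_of_mem ha]
  simp

private lemma good_lb (k n j : ℕ) (hk : 1 ≤ k) (hj : 1 ≤ j) (hjk : j ≤ k) (hjn : j ≤ n) :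
    (k:ℝ)^n ≤ 3 * (k:ℝ) * ((k-1:ℕ):ℝ)^(j-1) * (k:ℝ)^(n-j) := by
  have hkR : (0:ℝ) < k := by exact_mod_cast hk
  have key : (k:ℝ)^(j-1) ≤ 3 * ((k-1:ℕ):ℝ)^(j-1) := by
    rcases eq_or_lt_of_le hk with h1 | h2
    · -- k = 1, so j = 1
      have : j = 1 := le_antisymm (h1 ▸ hjk) hj
      subst this
      simp [← h1]
    · -- k ≥ 2
      have hk2 : 2 ≤ k := h2
      have hk1R : (0:ℝ) < (k:ℝ) - 1 := by
        have : (2:ℝ) ≤ k := by exact_mod_cast hk2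
        linarith
      have hcast : ((k-1:ℕ):ℝ) = (k:ℝ) - 1 := by
        push_cast [Nat.cast_sub hk]; ring
      rw [hcast]
      have hsplit : (k:ℝ) = ((k:ℝ) - 1) * (1 + 1/((k:ℝ)-1)) := by
        field_simp
        ring
      nth_rewrite 1 [hsplit]
      rw [mul_pow]
      have hb : (1 + 1/((k:ℝ)-1))^(j-1) ≤ 3 := by
        have h1 : (1 + 1/((k:ℝ)-1))^(j-1) ≤ Real.exp (1/((k:ℝ)-1)) ^ (j-1) := by
          apply pow_le_pow_left₀ (by positivity)
          linarith [Real.add_one_le_exp (1/((k:ℝ)-1))]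
        have h2 : Real.exp (1/((k:ℝ)-1)) ^ (j-1) = Real.exp ((j-1 : ℕ) * (1/((k:ℝ)-1))) := by
          rw [Real.exp_nat_mul]
        have h3 : ((j-1 : ℕ):ℝ) * (1/((k:ℝ)-1)) ≤ 1 := by
          rw [mul_one_div, div_le_one hk1R]
          have : ((j-1:ℕ):ℝ) ≤ ((k-1:ℕ):ℝ) := by
            exact_mod_cast Nat.sub_le_sub_right hjk 1
          rw [hcast] at this; exact this
        calc (1 + 1/((k:ℝ)-1))^(j-1) ≤ Real.exp ((j-1 : ℕ) * (1/((k:ℝ)-1))) := h2 ▸ h1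
          _ ≤ Real.exp 1 := Real.exp_le_exp.mpr h3
          _ ≤ 3 := Real.exp_one_lt_d9.le.trans (by norm_num)
      calc ((k:ℝ)-1)^(j-1) * (1 + 1/((k:ℝ)-1))^(j-1)
          ≤ ((k:ℝ)-1)^(j-1) * 3 := by
            apply mul_le_mul_of_nonneg_left hb (by positivity)
        _ = 3 * ((k:ℝ)-1)^(j-1) := by ring
  have hdecomp : (k:ℝ)^n = (k:ℝ) * (k:ℝ)^(j-1) * (k:ℝ)^(n-j) := by
    rw [← pow_succ', ← pow_add]
    congr 1
    omega
  rw [hdecomp]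
  calc (k:ℝ) * (k:ℝ)^(j-1) * (k:ℝ)^(n-j)
      ≤ (k:ℝ) * (3 * ((k-1:ℕ):ℝ)^(j-1)) * (k:ℝ)^(n-j) := by
        apply mul_le_mul_of_nonneg_right (mul_le_mul_of_nonneg_left key hkR.le) (by positivity)
    _ = 3 * (k:ℝ) * ((k-1:ℕ):ℝ)^(j-1) * (k:ℝ)^(n-j) := by ring

private lemma exists_good_family (n k m : ℕ) [NeZero k] (hn : 2 ≤ n) (hk : 1 ≤ k) (hkn : k ≤ n)
    (hm : (n:ℝ)^(4*k) * (1 - 1/(3*(k:ℝ)))^m < 1) :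
    ∃ F : Fin m → Fin n → Fin k, ∀ A : Finset (Fin n), A.card ≤ k → ∀ a ∈ A,
      ∃ i, F i a = 0 ∧ ∀ b ∈ A, b ≠ a → F i b ≠ 0 := by
  classical
  set Bad : Finset (Fin m → Fin n → Fin k) :=
    univ.filter (fun F => ∃ A : Finset (Fin n), A.card ≤ k ∧ ∃ a ∈ A,
      ∀ i, ¬ (F i a = 0 ∧ ∀ b ∈ A, b ≠ a → F i b ≠ 0)) with hBad
  suffices h : Bad.card < Fintype.card (Fin m → Fin n → Fin k) by
    obtain ⟨F, hF⟩ : ∃ F, F ∉ Bad := by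
      by_contra hA
      push_neg at hA
      have : Bad = univ := eq_univ_of_forall hA
      rw [this, card_univ] at h
      exact lt_irrefl _ h
    refine ⟨F, fun A hA a ha => ?_⟩
    by_contra hno
    rw [not_exists] at hno
    exact hF (mem_filter.mpr ⟨mem_univ _, A, hA, a, ha, hno⟩)
  -- counting
  set BadG : Finset (Fin n) → Fin n → Finset (Fin n → Fin k) :=
    fun A a => univ.filter (fun g => ¬ (g a = 0 ∧ ∀ b ∈ A, b ≠ a → g b ≠ 0)) with hBadG
  set 𝒜 : Finset (Finset (Fin n)) := univ.powerset.filter (fun A => A.card ≤ k) with h𝒜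
  have hsub : Bad ⊆ 𝒜.biUnion (fun A => A.biUnion (fun a =>
      Fintype.piFinset (fun _ : Fin m => BadG A a))) := by
    intro F hF
    rw [hBad, mem_filter] at hF
    obtain ⟨-, A, hA, a, ha, hall⟩ := hF
    refine mem_biUnion.mpr ⟨A, ?_, mem_biUnion.mpr ⟨a, ha, ?_⟩⟩
    · rw [h𝒜, mem_filter]; exact ⟨mem_powerset.mpr (subset_univ A), hA⟩
    · rw [Fintype.mem_piFinset]
      intro i
      rw [hBadG]
      exact mem_filter.mpr ⟨mem_univ _, hall i⟩
  have hcard1 : Bad.card ≤ ∑ A ∈ 𝒜, ∑ a ∈ A, (BadG A a).card ^ m := by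
    refine (card_le_card hsub).trans ((card_biUnion_le).trans ?_)
    refine Finset.sum_le_sum fun A hA => (card_biUnion_le).trans (Finset.sum_le_sum fun a ha => ?_)
    rw [Fintype.card_piFinset]
    simp
  -- per-pair real bound
  have hkR : (1:ℝ) ≤ k := by exact_mod_cast hk
  have h3k : (0:ℝ) < 3 * (k:ℝ) := by positivity
  have hfrac : (0:ℝ) ≤ 1 - 1/(3*(k:ℝ)) := by
    rw [sub_nonneg, div_le_one h3k]
    linarith
  have hfun : Fintype.card (Fin n → Fin k) = k ^ n := by
    rw [Fintype.card_fun, Fintype.card_fin, Fintype.card_fin]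
  have hpair : ∀ A ∈ 𝒜, ∀ a ∈ A,
      ((BadG A a).card : ℝ) ≤ (k:ℝ)^n * (1 - 1/(3*(k:ℝ))) := by
    intro A hA a ha
    have hAk : A.card ≤ k := (mem_filter.mp hA).2
    have hA1 : 1 ≤ A.card := card_pos.mpr ⟨a, ha⟩
    have hAn : A.card ≤ n := hAk.trans hkn
    have hgood := count_good n k A a ha
    have hBG : BadG A a = univ \ (univ.filter (fun g : Fin n → Fin k =>
        g a = 0 ∧ ∀ b ∈ A, b ≠ a → g b ≠ 0)) := Finset.filter_not _ _
    have hle : (k-1)^(A.card-1)*k^(n-A.card) ≤ k^n := by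
      rw [← hgood]
      exact (card_filter_le _ _).trans (le_of_eq (by rw [card_univ, hfun]))
    have hcardB : (BadG A a).card = k^n - ((k-1)^(A.card-1)*k^(n-A.card)) := by
      rw [hBG, card_sdiff_of_subset (filter_subset _ _), card_univ, hfun, hgood]
    have hlb := good_lb k n A.card hk hA1 hAk hAn
    have hGR : (k:ℝ)^n / (3*(k:ℝ)) ≤ (((k-1)^(A.card - 1) * k^(n - A.card) : ℕ) : ℝ) := by
      rw [div_le_iff₀ h3k]
      push_cast
      calc (k:ℝ)^n ≤ 3 * (k:ℝ) * ((k-1:ℕ):ℝ)^(A.card-1) * (k:ℝ)^(n-A.card) := hlb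
        _ = ((k-1:ℕ):ℝ)^(A.card-1) * (k:ℝ)^(n-A.card) * (3*(k:ℝ)) := by ring
    have hBR : ((BadG A a).card : ℝ)
        = (k:ℝ)^n - (((k-1)^(A.card - 1) * k^(n - A.card) : ℕ) : ℝ) := by
      rw [hcardB, Nat.cast_sub hle]
      push_cast
      ring
    rw [hBR]
    have heq : (k:ℝ)^n * (1 - 1/(3*(k:ℝ))) = (k:ℝ)^n - (k:ℝ)^n / (3*(k:ℝ)) := by
      field_simp
    rw [heq]
    linarith
  -- cardinality of the family of small sets
  have h𝒜sub : 𝒜 ⊆ (Finset.range (k+1)).biUnion (fun j => Finset.powersetCard j univ) := by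
    intro A hA
    have hAk : A.card ≤ k := (mem_filter.mp hA).2
    exact mem_biUnion.mpr ⟨A.card, Finset.mem_range.mpr (by omega),
      Finset.mem_powersetCard_univ.mpr rfl⟩
  have h𝒜card : 𝒜.card ≤ (k+1) * n^k := by
    refine (card_le_card h𝒜sub).trans ((card_biUnion_le).trans ?_)
    calc ∑ j ∈ Finset.range (k+1), (Finset.powersetCard j (univ : Finset (Fin n))).card
        ≤ ∑ _j ∈ Finset.range (k+1), n^k := by
          refine Finset.sum_le_sum fun j hj => ?_
          rw [Finset.card_powersetCard, card_univ, Fintype.card_fin]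
          exact (Nat.choose_le_pow n j).trans
            (Nat.pow_le_pow_right (by omega) (by have := Finset.mem_range.mp hj; omega))
      _ = (k+1) * n^k := by rw [Finset.sum_const, Finset.card_range, smul_eq_mul]
  have hAn2 : (𝒜.card * n : ℕ) ≤ n^(4*k) := by
    calc 𝒜.card * n ≤ ((k+1) * n^k) * n := Nat.mul_le_mul_right n h𝒜card
      _ ≤ (n^2 * n^k) * n := by
          have : k + 1 ≤ n^2 := by nlinarith
          exact Nat.mul_le_mul_right n (Nat.mul_le_mul_right _ this)
      _ = n^(k+3) := by ring
      _ ≤ n^(4*k) := Nat.pow_le_pow_right (by omega) (by omega)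
  -- assemble
  have hΩ : (Fintype.card (Fin m → Fin n → Fin k) : ℝ) = ((k:ℝ)^n)^m := by
    rw [Fintype.card_fun, hfun, Fintype.card_fin]
    push_cast
    ring
  rw [← Nat.cast_lt (α := ℝ), hΩ]
  set X : ℝ := ((k:ℝ)^n * (1 - 1/(3*(k:ℝ))))^m with hX
  have hXnn : 0 ≤ X := by positivity
  calc (Bad.card : ℝ) ≤ ((∑ A ∈ 𝒜, ∑ a ∈ A, (BadG A a).card ^ m : ℕ) : ℝ) := by
        exact_mod_cast hcard1
    _ = ∑ A ∈ 𝒜, ∑ a ∈ A, ((BadG A a).card : ℝ) ^ m := by push_cast; ring_nf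
    _ ≤ ∑ A ∈ 𝒜, ∑ a ∈ A, X := by
        refine Finset.sum_le_sum fun A hA => Finset.sum_le_sum fun a ha => ?_
        exact pow_le_pow_left₀ (by positivity) (hpair A hA a ha) m
    _ = ∑ A ∈ 𝒜, (A.card : ℝ) * X := by
        refine Finset.sum_congr rfl fun A hA => ?_
        rw [Finset.sum_const, nsmul_eq_mul]
    _ ≤ ∑ _A ∈ 𝒜, (n : ℝ) * X := by
        refine Finset.sum_le_sum fun A hA => ?_
        have : (A.card : ℝ) ≤ n := by
          exact_mod_cast (Finset.card_le_univ A).trans (le_of_eq (Fintype.card_fin n))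
        exact mul_le_mul_of_nonneg_right this hXnn
    _ = (𝒜.card : ℝ) * ((n:ℝ) * X) := by rw [Finset.sum_const, nsmul_eq_mul]
    _ ≤ (n:ℝ)^(4*k) * X := by
        have hcast : ((𝒜.card : ℝ)) * (n:ℝ) ≤ (n:ℝ)^(4*k) := by exact_mod_cast hAn2
        calc (𝒜.card : ℝ) * ((n:ℝ) * X) = ((𝒜.card : ℝ) * (n:ℝ)) * X := by ring
          _ ≤ (n:ℝ)^(4*k) * X := mul_le_mul_of_nonneg_right hcast hXnn
    _ < ((k:ℝ)^n)^m := by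
        rw [hX, mul_pow]
        calc (n:ℝ)^(4*k) * (((k:ℝ)^n)^m * (1 - 1/(3*(k:ℝ)))^m)
            = ((k:ℝ)^n)^m * ((n:ℝ)^(4*k) * (1 - 1/(3*(k:ℝ)))^m) := by ring
          _ < ((k:ℝ)^n)^m * 1 := mul_lt_mul_of_pos_left hm (by positivity)
          _ = ((k:ℝ)^n)^m := mul_one _


end StrongSelectorAux

/-- For every `n ≥ 2` and `1 ≤ k ≤ n`, there exists a strong `k`-selector over `{0,…,n-1}`
of size `m ≤ C·k²·log n` for some absolute constant `C`: a family `S : Fin m → Finset (Fin n)`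
such that for every `A` with `|A| ≤ k` and every `a ∈ A`, some `S i` satisfies `S i ∩ A = {a}`. -/
theorem strong_selector_exists :
    ∃ C : ℝ, 0 < C ∧
      ∀ n k : ℕ, 2 ≤ n → 1 ≤ k → k ≤ n →
        ∃ (m : ℕ) (S : Fin m → Finset (Fin n)),
          (m : ℝ) ≤ C * (k : ℝ) ^ 2 * Real.log n ∧
          ∀ A : Finset (Fin n), A.card ≤ k → ∀ a ∈ A, ∃ i : Fin m, S i ∩ A = {a} := by
  classical
  refine ⟨20, by norm_num, fun n k hn hk hkn => ?_⟩
  haveI : NeZero k := ⟨by omega⟩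
  set L : ℝ := Real.log n with hLdef
  have hnR : (2:ℝ) ≤ (n:ℝ) := by exact_mod_cast hn
  have hkR : (1:ℝ) ≤ (k:ℝ) := by exact_mod_cast hk
  have hL2 : Real.log 2 ≤ L := Real.log_le_log (by norm_num) hnR
  have hlog2 : (0.6931471803 : ℝ) < Real.log 2 := Real.log_two_gt_d9
  have hLpos : (0:ℝ) < L := by linarith
  set x : ℝ := 12 * (k:ℝ)^2 * L with hxdef
  have hxnn : (0:ℝ) ≤ x := by positivity
  set m : ℕ := ⌈x⌉₊ + 1 with hmdef
  have hmx : x < (m:ℝ) := by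
    have h1 : x ≤ (⌈x⌉₊ : ℝ) := Nat.le_ceil x
    have : ((⌈x⌉₊ + 1 : ℕ) : ℝ) = (⌈x⌉₊ : ℝ) + 1 := by push_cast; ring
    rw [hmdef, this]
    linarith
  have hmub : (m:ℝ) ≤ 20 * (k:ℝ)^2 * L := by
    have h1 : (⌈x⌉₊ : ℝ) < x + 1 := Nat.ceil_lt_add_one hxnn
    have h2 : ((⌈x⌉₊ + 1 : ℕ) : ℝ) = (⌈x⌉₊ : ℝ) + 1 := by push_cast; ring
    have h3 : (m:ℝ) ≤ x + 2 := by rw [hmdef, h2]; linarith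
    have h4 : (2:ℝ) ≤ 3 * (k:ℝ)^2 * L := by nlinarith
    rw [hxdef] at h3
    nlinarith
  have h3k : (0:ℝ) < 3 * (k:ℝ) := by positivity
  have hm : (n:ℝ)^(4*k) * (1 - 1/(3*(k:ℝ)))^m < 1 := by
    have hfrac : (0:ℝ) ≤ 1 - 1/(3*(k:ℝ)) := by
      rw [sub_nonneg, div_le_one h3k]; linarith
    have hb1 : (n:ℝ)^(4*k) = Real.exp ((4*k : ℕ) * L) := by
      rw [Real.exp_nat_mul, hLdef, Real.exp_log (by linarith)]
    have hb2 : (1 - 1/(3*(k:ℝ)))^m ≤ Real.exp ((m:ℕ) * (-(1/(3*(k:ℝ))))) := by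
      rw [Real.exp_nat_mul]
      refine pow_le_pow_left₀ hfrac ?_ m
      have := Real.add_one_le_exp (-(1/(3*(k:ℝ))))
      linarith
    calc (n:ℝ)^(4*k) * (1 - 1/(3*(k:ℝ)))^m
        ≤ Real.exp ((4*k : ℕ) * L) * Real.exp ((m:ℕ) * (-(1/(3*(k:ℝ))))) := by
          rw [hb1]
          exact mul_le_mul_of_nonneg_left hb2 (Real.exp_pos _).le
      _ = Real.exp ((4*k : ℕ) * L + (m:ℕ) * (-(1/(3*(k:ℝ))))) := (Real.exp_add _ _).symm
      _ < 1 := by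
          have hmx' : 12 * (k:ℝ)^2 * L < (m:ℝ) := hxdef ▸ hmx
          have h1 : ((4*k:ℕ):ℝ) = 4*(k:ℝ) := by push_cast; ring
          have h2 : 4*(k:ℝ)*L < (m:ℝ) * (1/(3*(k:ℝ))) := by
            rw [mul_one_div, lt_div_iff₀ h3k]
            nlinarith [hmx']
          have hlt : ((4*k:ℕ):ℝ) * L + (m:ℕ) * (-(1/(3*(k:ℝ)))) < 0 := by
            rw [h1]
            linarith
          calc Real.exp (((4*k:ℕ):ℝ) * L + (m:ℕ) * (-(1/(3*(k:ℝ)))))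
              < Real.exp 0 := Real.exp_lt_exp.mpr hlt
            _ = 1 := Real.exp_zero
  obtain ⟨F, hF⟩ := exists_good_family n k m hn hk hkn hm
  refine ⟨m, fun i => Finset.univ.filter (fun x => F i x = 0), ?_, ?_⟩
  · calc (m:ℝ) ≤ 20 * (k:ℝ)^2 * L := hmub
      _ = 20 * (k:ℝ)^2 * Real.log n := by rw [hLdef]
  · intro A hA a ha
    obtain ⟨i, h0, h1⟩ := hF A hA a ha
    refine ⟨i, ?_⟩
    ext y
    simp only [Finset.mem_inter, Finset.mem_filter, Finset.mem_univ, true_and,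
      Finset.mem_singleton]
    constructor
    · rintro ⟨hy0, hyA⟩
      by_contra hya
      exact h1 y hyA hya hy0
    · rintro rfl
      exact ⟨h0, ha⟩
end

section
/- For every n ≥ 2 and every k with 1 ≤ k ≤ n/2, there exists a family S̄ = (S_1,...,S_m) of subsets of {0,...,n-1} with m = O(k² log n) and a threshold ξ such that: for every A ⊆ {0,...,n-1} with |A| ≤ k and a ∈ A, |{j : S_j ∩ A = {a}}| > ξ; and for every A with |A| ≥ 2k and a ∈ A, |{j : S_j ∩ A = {a}}| < ξ. -/
open Finset

lemma mgf_id {m : ℕ} {X : Type*} [Fintype X] [DecidableEq X] (P : X → Prop) [DecidablePred P] (l : ℝ) :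
    ∑ ω : Fin m → X, l ^ (Finset.univ.filter (fun j => P (ω j))).card
      = (∑ g : X, if P g then l else 1) ^ m := by
  have h1 : ((∑ g : X, if P g then l else 1)) ^ m
      = ∏ _j : Fin m, ∑ g : X, (if P g then l else 1) := by
    rw [Finset.prod_const, Finset.card_univ, Fintype.card_fin]
  rw [h1, Finset.prod_univ_sum, Fintype.piFinset_univ]
  apply Finset.sum_congr rfl
  intro ω _
  rw [Finset.prod_ite, Finset.prod_const, Finset.prod_const_one, mul_one]

lemma upper_tail {m : ℕ} {X : Type*} [Fintype X] [DecidableEq X] (P : X → Prop) [DecidablePred P]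
    {l ξ : ℝ} (hl : 1 ≤ l) :
    ((Finset.univ.filter (fun ω : Fin m → X => ξ ≤ ((Finset.univ.filter (fun j => P (ω j))).card : ℝ))).card : ℝ)
      * l ^ ξ ≤ (∑ g : X, if P g then l else 1) ^ m := by
  rw [← mgf_id P l]
  calc ((Finset.univ.filter (fun ω : Fin m → X => ξ ≤ ((Finset.univ.filter (fun j => P (ω j))).card : ℝ))).card : ℝ) * l ^ ξ
      = ∑ _ω ∈ (Finset.univ.filter (fun ω : Fin m → X => ξ ≤ ((Finset.univ.filter (fun j => P (ω j))).card : ℝ))), l ^ ξ := by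
        rw [Finset.sum_const, nsmul_eq_mul]
    _ ≤ ∑ ω ∈ (Finset.univ.filter (fun ω : Fin m → X => ξ ≤ ((Finset.univ.filter (fun j => P (ω j))).card : ℝ))),
          l ^ (Finset.univ.filter (fun j => P (ω j))).card := by
        apply Finset.sum_le_sum
        intro ω hω
        rw [Finset.mem_filter] at hω
        calc l ^ ξ ≤ l ^ ((Finset.univ.filter (fun j => P (ω j))).card : ℝ) :=
              Real.rpow_le_rpow_of_exponent_le hl hω.2
          _ = l ^ (Finset.univ.filter (fun j => P (ω j))).card := by
              rw [Real.rpow_natCast]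
    _ ≤ ∑ ω : Fin m → X, l ^ (Finset.univ.filter (fun j => P (ω j))).card := by
        apply Finset.sum_le_sum_of_subset_of_nonneg (Finset.filter_subset _ _)
        intro i _ _
        positivity

lemma lower_tail {m : ℕ} {X : Type*} [Fintype X] [DecidableEq X] (P : X → Prop) [DecidablePred P]
    {l ξ : ℝ} (hl0 : 0 < l) (hl : l ≤ 1) :
    ((Finset.univ.filter (fun ω : Fin m → X => ((Finset.univ.filter (fun j => P (ω j))).card : ℝ) ≤ ξ)).card : ℝ)
      * l ^ ξ ≤ (∑ g : X, if P g then l else 1) ^ m := by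
  rw [← mgf_id P l]
  calc ((Finset.univ.filter (fun ω : Fin m → X => ((Finset.univ.filter (fun j => P (ω j))).card : ℝ) ≤ ξ)).card : ℝ) * l ^ ξ
      = ∑ _ω ∈ (Finset.univ.filter (fun ω : Fin m → X => ((Finset.univ.filter (fun j => P (ω j))).card : ℝ) ≤ ξ)), l ^ ξ := by
        rw [Finset.sum_const, nsmul_eq_mul]
    _ ≤ ∑ ω ∈ (Finset.univ.filter (fun ω : Fin m → X => ((Finset.univ.filter (fun j => P (ω j))).card : ℝ) ≤ ξ)),
          l ^ (Finset.univ.filter (fun j => P (ω j))).card := by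
        apply Finset.sum_le_sum
        intro ω hω
        rw [Finset.mem_filter] at hω
        calc l ^ ξ ≤ l ^ ((Finset.univ.filter (fun j => P (ω j))).card : ℝ) := by
              exact Real.rpow_le_rpow_of_exponent_ge hl0 hl hω.2
          _ = l ^ (Finset.univ.filter (fun j => P (ω j))).card := by
              rw [Real.rpow_natCast]
    _ ≤ ∑ ω : Fin m → X, l ^ (Finset.univ.filter (fun j => P (ω j))).card := by
        apply Finset.sum_le_sum_of_subset_of_nonneg (Finset.filter_subset _ _)
        intro i _ _
        positivity

noncomputable def dq1 (k : ℕ) : ℝ := (2*(k:ℝ)-1)^(k-1) / (2*(k:ℝ))^k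
noncomputable def dq2 (k : ℕ) : ℝ := (2*(k:ℝ)-1)^(2*k-1) / (2*(k:ℝ))^(2*k)
noncomputable def dxi (n k m : ℕ) : ℝ := 9*((m:ℝ) * dq2 k / 8 + (2*(k:ℝ)+3) * Real.log n)

lemma dq1_pos {k : ℕ} (hk : 1 ≤ k) : 0 < dq1 k := by
  have h1 : (1:ℝ) ≤ k := by exact_mod_cast hk
  apply div_pos
  · exact pow_pos (by linarith) _
  · exact pow_pos (by linarith) _

lemma dq2_pos {k : ℕ} (hk : 1 ≤ k) : 0 < dq2 k := by
  have h1 : (1:ℝ) ≤ k := by exact_mod_cast hk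
  apply div_pos
  · exact pow_pos (by linarith) _
  · exact pow_pos (by linarith) _

lemma dq1_le_one {k : ℕ} (hk : 1 ≤ k) : dq1 k ≤ 1 := by
  have h1 : (1:ℝ) ≤ k := by exact_mod_cast hk
  rw [dq1, div_le_one (pow_pos (by linarith) _)]
  calc (2*(k:ℝ)-1)^(k-1) ≤ (2*(k:ℝ))^(k-1) :=
        pow_le_pow_left₀ (by linarith) (by linarith) _
    _ ≤ (2*(k:ℝ))^k := pow_le_pow_right₀ (by linarith) (Nat.sub_le k 1)

lemma dq1_ge {k : ℕ} (hk : 1 ≤ k) : 1/(4*(k:ℝ)) ≤ dq1 k := by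
  obtain ⟨k', rfl⟩ : ∃ k', k = k' + 1 := ⟨k - 1, by omega⟩
  have hc : (0:ℝ) ≤ (k':ℝ) := Nat.cast_nonneg k'
  set K : ℝ := 2*((k' + 1 : ℕ):ℝ) with hK
  have hK2 : (2:ℝ) ≤ K := by rw [hK]; push_cast; linarith
  have hKpos : (0:ℝ) < K := by linarith
  have hber : (1:ℝ) - (k':ℝ)/K ≤ ((K-1)/K)^k' := by
    have h := one_add_mul_le_pow (a := -1/K) (by
      rw [neg_div]
      have : 1/K ≤ 1 := by rw [div_le_one hKpos]; linarith
      linarith) k'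
    calc (1:ℝ) - (k':ℝ)/K = 1 + (k':ℝ)*(-1/K) := by ring
      _ ≤ (1 + -1/K)^k' := h
      _ = ((K-1)/K)^k' := by
          congr 1
          field_simp
          ring_nf
  have hhalf : (1:ℝ)/2 ≤ ((K-1)/K)^k' := by
    refine le_trans ?_ hber
    have : (k':ℝ)/K ≤ 1/2 := by
      rw [div_le_div_iff₀ hKpos (by norm_num), hK]
      push_cast; linarith
    linarith
  have heq : dq1 (k' + 1) = (1/K) * ((K-1)/K)^k' := by
    rw [dq1]
    have h1 : (k' + 1) - 1 = k' := by omega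
    rw [h1, div_pow, pow_succ, hK]
    push_cast
    have hKne : (2*((k':ℝ)+1)) ≠ 0 := by positivity
    field_simp
  rw [heq]
  have h2 : 1/(4*(((k' + 1 : ℕ)):ℝ)) = (1/K) * (1/2) := by
    rw [hK]
    push_cast
    have : (0:ℝ) < (k':ℝ) + 1 := by linarith
    field_simp
    ring
  rw [h2]
  apply mul_le_mul_of_nonneg_left hhalf (by positivity)

lemma dq2_le {k : ℕ} (hk : 1 ≤ k) : dq2 k ≤ (2/3) * dq1 k := by
  obtain ⟨k', rfl⟩ : ∃ k', k = k' + 1 := ⟨k - 1, by omega⟩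
  have hc : (0:ℝ) ≤ (k':ℝ) := Nat.cast_nonneg k'
  set K : ℝ := 2*((k' + 1 : ℕ):ℝ) with hK
  have hK2 : (2:ℝ) ≤ K := by rw [hK]; push_cast; linarith
  have hKpos : (0:ℝ) < K := by linarith
  have hKm1 : (1:ℝ) ≤ K - 1 := by linarith
  have hKm1pos : (0:ℝ) < K - 1 := by linarith
  have hber : (3:ℝ)/2 ≤ (K/(K-1))^(k'+1) := by
    have h := one_add_mul_le_pow (a := 1/(K-1)) (by
      have h0 : (0:ℝ) ≤ 1/(K-1) := by positivity
      linarith) (k'+1)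
    have he : (1:ℝ) + 1/(K-1) = K/(K-1) := by field_simp; ring
    rw [he] at h
    refine le_trans ?_ h
    have hfrac : (1:ℝ)/2 ≤ ((k'+1:ℕ):ℝ) * (1/(K-1)) := by
      rw [mul_one_div, le_div_iff₀ hKm1pos, hK]
      push_cast; linarith
    linarith
  have hs : ((K-1)/K)^(k'+1) ≤ 2/3 := by
    have hinv : ((K-1)/K)^(k'+1) = ((K/(K-1))^(k'+1))⁻¹ := by
      rw [← inv_pow]
      congr 1
      rw [inv_div]
    rw [hinv]
    calc ((K/(K-1))^(k'+1))⁻¹ ≤ ((3:ℝ)/2)⁻¹ := by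
          apply inv_anti₀ (by norm_num) hber
      _ = 2/3 := by norm_num
  have heq : dq2 (k'+1) = dq1 (k'+1) * ((K-1)/K)^(k'+1) := by
    rw [dq1, dq2]
    have e1 : 2*(k'+1)-1 = k' + (k'+1) := by omega
    have e2 : 2*(k'+1) = (k'+1)+(k'+1) := by omega
    have e3 : (k'+1)-1 = k' := by omega
    rw [e1, e2, e3, pow_add, pow_add, div_pow, hK]
    push_cast
    have hKne : (2*((k':ℝ)+1)) ≠ 0 := by positivity
    field_simp
    ring
  rw [heq]
  have h1pos := dq1_pos (k := k'+1) (by omega)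
  calc dq1 (k'+1) * ((K-1)/K)^(k'+1) ≤ dq1 (k'+1) * (2/3) :=
        mul_le_mul_of_nonneg_left hs (le_of_lt h1pos)
    _ = (2/3) * dq1 (k'+1) := by ring

lemma sum_ite_card {X : Type*} [Fintype X] (P : X → Prop) [DecidablePred P] (l : ℝ) :
    ∑ g : X, (if P g then l else 1)
      = (Fintype.card X : ℝ) + (l - 1) * ((Finset.univ.filter P).card : ℝ) := by
  rw [Finset.sum_ite, Finset.sum_const, Finset.sum_const, nsmul_eq_mul, nsmul_eq_mul, mul_one]
  have h := Finset.card_filter_add_card_filter_not (s := (Finset.univ : Finset X)) (p := P)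
  rw [Finset.card_univ] at h
  have h2 : ((Finset.univ.filter (fun g => ¬ P g)).card : ℝ)
      = (Fintype.card X : ℝ) - ((Finset.univ.filter P).card : ℝ) := by
    have := congrArg (fun x : ℕ => (x : ℝ)) h
    push_cast at this
    linarith
  rw [h2]
  ring

lemma log_nine_eighth : (1:ℝ)/9 ≤ Real.log (9/8) := by
  have h := Real.log_le_sub_one_of_pos (x := (8/9 : ℝ)) (by norm_num)
  have h2 : ((8:ℝ)/9) = ((9:ℝ)/8)⁻¹ := by norm_num
  rw [h2, Real.log_inv] at h
  linarith

lemma log_eight_seventh : Real.log (8/7) ≤ (1:ℝ)/7 := by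
  have h := Real.log_le_sub_one_of_pos (x := (8/7 : ℝ)) (by norm_num)
  linarith

lemma chern_low (m : ℕ) {X : Type*} [Fintype X] [DecidableEq X] (P : X → Prop) [DecidablePred P]
    {ξ q D : ℝ} (hq0 : 0 < q) (hq1 : q ≤ 1) (hD : 0 < D) (hξ : 0 ≤ ξ)
    (hT : 0 < (Fintype.card X : ℝ))
    (hG : ((Finset.univ.filter P).card : ℝ) = (Fintype.card X : ℝ) * q)
    (hkey : ξ * (1/7) ≤ (m:ℝ) * q / 8 - Real.log D) :
    ((Finset.univ.filter (fun ω : Fin m → X => ((Finset.univ.filter (fun j => P (ω j))).card : ℝ) ≤ ξ)).card : ℝ)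
      ≤ (Fintype.card X : ℝ)^m / D := by
  have hq8 : (0:ℝ) < 1 - q/8 := by linarith
  have htail := lower_tail (m := m) (X := X) P (l := (7/8 : ℝ)) (by norm_num) (by norm_num) (ξ := ξ)
  rw [sum_ite_card] at htail
  have hsum : (Fintype.card X : ℝ) + ((7:ℝ)/8 - 1) * ((Finset.univ.filter P).card : ℝ)
      = (Fintype.card X : ℝ) * (1 - q/8) := by
    rw [hG]; ring
  rw [hsum, mul_pow] at htail
  -- key : (1 - q/8)^m ≤ D⁻¹ * (7/8)^ξ
  have hkey2 : ((1 - q/8):ℝ)^m ≤ D⁻¹ * ((7:ℝ)/8)^ξ := by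
    have e1 : ((1 - q/8):ℝ)^m = Real.exp ((m:ℝ) * Real.log (1 - q/8)) := by
      rw [← Real.log_pow, Real.exp_log (by positivity)]
    have e2 : D⁻¹ * ((7:ℝ)/8)^ξ = Real.exp (-Real.log D + Real.log (7/8) * ξ) := by
      rw [Real.exp_add, Real.exp_neg, Real.exp_log hD, ← Real.rpow_def_of_pos (by norm_num : (0:ℝ) < 7/8)]
    rw [e1, e2]
    apply Real.exp_le_exp.mpr
    have l1 : Real.log (1 - q/8) ≤ -q/8 := by
      have := Real.log_le_sub_one_of_pos hq8
      linarith
    have l2 : -(ξ * (1/7)) ≤ Real.log (7/8) * ξ := by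
      have h78 : Real.log ((7:ℝ)/8) = -Real.log (8/7) := by
        rw [← Real.log_inv]; norm_num
      rw [h78]
      have := log_eight_seventh
      nlinarith
    have l3 : (m:ℝ) * Real.log (1 - q/8) ≤ (m:ℝ) * (-q/8) :=
      mul_le_mul_of_nonneg_left l1 (Nat.cast_nonneg m)
    nlinarith [Nat.cast_nonneg (α := ℝ) m]
  have hpow : (0:ℝ) < ((7:ℝ)/8)^ξ := Real.rpow_pos_of_pos (by norm_num) _
  rw [div_eq_mul_inv]
  rw [← mul_le_mul_iff_of_pos_right hpow]
  calc ((Finset.univ.filter (fun ω : Fin m → X => ((Finset.univ.filter (fun j => P (ω j))).card : ℝ) ≤ ξ)).card : ℝ) * ((7:ℝ)/8)^ξ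
      ≤ (Fintype.card X : ℝ)^m * ((1 - q/8):ℝ)^m := htail
    _ ≤ (Fintype.card X : ℝ)^m * (D⁻¹ * ((7:ℝ)/8)^ξ) := by
        apply mul_le_mul_of_nonneg_left hkey2 (by positivity)
    _ = (Fintype.card X : ℝ)^m * D⁻¹ * ((7:ℝ)/8)^ξ := by ring

lemma chern_up (m : ℕ) {X : Type*} [Fintype X] [DecidableEq X] (P : X → Prop) [DecidablePred P]
    {ξ q D : ℝ} (hq0 : 0 < q) (hD : 0 < D) (hξ : 0 ≤ ξ)
    (hG : ((Finset.univ.filter P).card : ℝ) = (Fintype.card X : ℝ) * q)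
    (hkey : (m:ℝ) * q / 8 + Real.log D ≤ ξ * (1/9)) :
    ((Finset.univ.filter (fun ω : Fin m → X => ξ ≤ ((Finset.univ.filter (fun j => P (ω j))).card : ℝ))).card : ℝ)
      ≤ (Fintype.card X : ℝ)^m / D := by
  have hq8 : (0:ℝ) < 1 + q/8 := by linarith
  have htail := upper_tail (m := m) (X := X) P (l := (9/8 : ℝ)) (by norm_num) (ξ := ξ)
  rw [sum_ite_card] at htail
  have hsum : (Fintype.card X : ℝ) + ((9:ℝ)/8 - 1) * ((Finset.univ.filter P).card : ℝ)
      = (Fintype.card X : ℝ) * (1 + q/8) := by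
    rw [hG]; ring
  rw [hsum, mul_pow] at htail
  have hkey2 : ((1 + q/8):ℝ)^m ≤ D⁻¹ * ((9:ℝ)/8)^ξ := by
    have e1 : ((1 + q/8):ℝ)^m = Real.exp ((m:ℝ) * Real.log (1 + q/8)) := by
      rw [← Real.log_pow, Real.exp_log (by positivity)]
    have e2 : D⁻¹ * ((9:ℝ)/8)^ξ = Real.exp (-Real.log D + Real.log (9/8) * ξ) := by
      rw [Real.exp_add, Real.exp_neg, Real.exp_log hD, ← Real.rpow_def_of_pos (by norm_num : (0:ℝ) < 9/8)]
    rw [e1, e2]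
    apply Real.exp_le_exp.mpr
    have l1 : Real.log (1 + q/8) ≤ q/8 := by
      have := Real.log_le_sub_one_of_pos hq8
      linarith
    have l2 : ξ * (1/9) ≤ Real.log (9/8) * ξ := by
      have := mul_le_mul_of_nonneg_left log_nine_eighth hξ
      linarith [mul_comm ξ (Real.log (9/8))]
    have l3 : (m:ℝ) * Real.log (1 + q/8) ≤ (m:ℝ) * (q/8) :=
      mul_le_mul_of_nonneg_left l1 (Nat.cast_nonneg m)
    nlinarith
  have hpow : (0:ℝ) < ((9:ℝ)/8)^ξ := Real.rpow_pos_of_pos (by norm_num) _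
  rw [div_eq_mul_inv]
  rw [← mul_le_mul_iff_of_pos_right hpow]
  calc ((Finset.univ.filter (fun ω : Fin m → X => ξ ≤ ((Finset.univ.filter (fun j => P (ω j))).card : ℝ))).card : ℝ) * ((9:ℝ)/8)^ξ
      ≤ (Fintype.card X : ℝ)^m * ((1 + q/8):ℝ)^m := htail
    _ ≤ (Fintype.card X : ℝ)^m * (D⁻¹ * ((9:ℝ)/8)^ξ) := by
        apply mul_le_mul_of_nonneg_left hkey2 (by positivity)
    _ = (Fintype.card X : ℝ)^m * D⁻¹ * ((9:ℝ)/8)^ξ := by ring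

lemma good_count {n r : ℕ} [NeZero r] (A : Finset (Fin n)) (a : Fin n) (ha : a ∈ A) :
    (Finset.univ.filter (fun g : Fin n → Fin r => g a = 0 ∧ ∀ b ∈ A, b ≠ a → g b ≠ 0)).card
      = (r - 1) ^ (A.card - 1) * r ^ (n - A.card) := by
  classical
  have hfilt : (Finset.univ.filter (fun g : Fin n → Fin r => g a = 0 ∧ ∀ b ∈ A, b ≠ a → g b ≠ 0))
      = Fintype.piFinset (fun x => if x = a then {0} else if x ∈ A then ({0} : Finset (Fin r))ᶜ else Finset.univ) := by
    ext g
    simp only [Finset.mem_filter, Finset.mem_univ, true_and, Fintype.mem_piFinset]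
    constructor
    · rintro ⟨h0, h1⟩ x
      by_cases hx : x = a
      · simp [hx, h0]
      · by_cases hxA : x ∈ A
        · simp [hx, hxA, h1 x hxA hx]
        · simp [hx, hxA]
    · intro h
      constructor
      · have := h a
        simpa using this
      · intro b hb hba
        have := h b
        simp [hba, hb] at this
        exact this
  rw [hfilt, Fintype.card_piFinset]
  have hcard : ∀ x : Fin n, (if x = a then ({0} : Finset (Fin r)) else if x ∈ A then ({0} : Finset (Fin r))ᶜ else Finset.univ).card
      = if x = a then 1 else if x ∈ A then r - 1 else r := by
    intro x
    by_cases hx : x = a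
    · simp [hx]
    · by_cases hxA : x ∈ A
      · simp [hx, hxA, Finset.card_compl]
      · simp [hx, hxA]
  calc (∏ x : Fin n, (if x = a then ({0} : Finset (Fin r)) else if x ∈ A then ({0} : Finset (Fin r))ᶜ else Finset.univ).card)
      = ∏ x : Fin n, (if x = a then 1 else if x ∈ A then r - 1 else r) := by
        exact Finset.prod_congr rfl (fun x _ => hcard x)
    _ = (∏ x ∈ A, (if x = a then 1 else if x ∈ A then r - 1 else r))
        * ∏ x ∈ Aᶜ, (if x = a then 1 else if x ∈ A then r - 1 else r) := (Finset.prod_mul_prod_compl A _).symm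
    _ = (r - 1) ^ (A.card - 1) * r ^ (n - A.card) := by
        congr 1
        · rw [← Finset.prod_erase_mul A _ ha]
          have h1 : ∀ x ∈ A.erase a, (if x = a then 1 else if x ∈ A then r - 1 else r) = r - 1 := by
            intro x hx
            have hxa := Finset.ne_of_mem_erase hx
            have hxA := Finset.mem_of_mem_erase hx
            simp [hxa, hxA]
          rw [Finset.prod_congr rfl h1, Finset.prod_const, Finset.card_erase_of_mem ha]
          simp
        · have h2 : ∀ x ∈ Aᶜ, (if x = a then 1 else if x ∈ A then r - 1 else r) = r := by
            intro x hx
            rw [Finset.mem_compl] at hx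
            have hxa : x ≠ a := fun h => hx (h ▸ ha)
            simp [hxa, hx]
          rw [Finset.prod_congr rfl h2, Finset.prod_const, Finset.card_compl, Fintype.card_fin]

lemma cast_good (n k t : ℕ) (hk : 1 ≤ k) (ht1 : 1 ≤ t) (ht : t ≤ n) :
    (((2*k-1)^(t-1) * (2*k)^(n-t) : ℕ) : ℝ)
      = (((2*k)^n : ℕ) : ℝ) * ((2*(k:ℝ)-1)^(t-1) / (2*(k:ℝ))^t) := by
  have h2k : (1:ℕ) ≤ 2*k := by omega
  have hkR : (1:ℝ) ≤ (k:ℝ) := by exact_mod_cast hk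
  have hne : (2*(k:ℝ)) ≠ 0 := by linarith
  push_cast [Nat.cast_sub h2k]
  have hsplit : (2*(k:ℝ))^n = (2*(k:ℝ))^t * (2*(k:ℝ))^(n-t) := by
    rw [← pow_add]
    congr 1
    omega
  rw [hsplit]
  field_simp

set_option maxHeartbeats 2000000 in
/-- For every `n ≥ 2` and `1 ≤ k ≤ n/2`, there exists a `k`-distinguisher over `{0,…,n-1}`:
a family `S : Fin m → Finset (Fin n)` with `m ≤ C·k²·log n` (for an absolute constant `C`)
and a threshold `ξ` such that `|{j : S j ∩ A = {a}}| > ξ` whenever `a ∈ A` and `|A| ≤ k`,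
while `|{j : S j ∩ A = {a}}| < ξ` whenever `a ∈ A` and `|A| ≥ 2k`. -/
theorem distinguisher_exists :
    ∃ C : ℝ, 0 < C ∧
      ∀ n k : ℕ, 2 ≤ n → 1 ≤ k → 2 * k ≤ n →
        ∃ (m : ℕ) (S : Fin m → Finset (Fin n)) (ξ : ℝ),
          (m : ℝ) ≤ C * (k : ℝ) ^ 2 * Real.log n ∧
          (∀ A : Finset (Fin n), A.card ≤ k → ∀ a ∈ A,
            ξ < ((Finset.univ.filter (fun j : Fin m => S j ∩ A = {a})).card : ℝ)) ∧
          (∀ A : Finset (Fin n), 2 * k ≤ A.card → ∀ a ∈ A,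
            ((Finset.univ.filter (fun j : Fin m => S j ∩ A = {a})).card : ℝ) < ξ) := by
  classical
  refine ⟨4000, by norm_num, ?_⟩
  intro n k hn hk hkn
  have hnR : (2:ℝ) ≤ (n:ℝ) := by exact_mod_cast hn
  have hkR : (1:ℝ) ≤ (k:ℝ) := by exact_mod_cast hk
  have hnpos : (0:ℝ) < n := by linarith
  have hL : 0 < Real.log n := Real.log_pos (by linarith)
  have hlog2 : Real.log 2 ≤ Real.log n := Real.log_le_log (by norm_num) hnR
  set m := ⌈(3000:ℝ) * (k:ℝ)^2 * Real.log n⌉₊ with hmdef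
  have hmge : (3000:ℝ) * (k:ℝ)^2 * Real.log n ≤ (m:ℝ) := Nat.le_ceil _
  have hmle : (m:ℝ) ≤ 4000 * (k:ℝ)^2 * Real.log n := by
    have h1 : (m:ℝ) < 3000*(k:ℝ)^2*Real.log n + 1 := Nat.ceil_lt_add_one (by positivity)
    have h2 : (1:ℝ)/2 ≤ Real.log n := by
      have h3 : (1:ℝ)/2 ≤ Real.log 2 := by
        have := Real.log_two_gt_d9; linarith
      linarith
    have ha : (1:ℝ) ≤ (k:ℝ)^2 := by nlinarith
    have hb : (1:ℝ)*(1/2) ≤ ((k:ℝ)^2)*Real.log n :=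
      mul_le_mul ha h2 (by norm_num) (by positivity)
    nlinarith [hb]
  haveI : NeZero (2*k) := ⟨by omega⟩
  have hq1 := dq1_ge hk
  have hq2pos := dq2_pos hk
  have hq1pos := dq1_pos hk
  have hq1le1 := dq1_le_one hk
  have hq2le := dq2_le hk
  set ξ : ℝ := 9*((m:ℝ) * dq2 k / 8 + (2*(k:ℝ)+3) * Real.log n) with hxidef
  have hxi0 : 0 ≤ ξ := by
    rw [hxidef]
    have h1 : 0 ≤ (m:ℝ) * dq2 k / 8 := by positivity
    have h2 : 0 ≤ (2*(k:ℝ)+3) * Real.log n := by positivity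
    linarith
  have hTcard : Fintype.card (Fin n → Fin (2*k)) = (2*k)^n := by
    simp [Fintype.card_fun]
  have hTpos : (0:ℝ) < (Fintype.card (Fin n → Fin (2*k)) : ℝ) := by
    rw [hTcard]
    exact_mod_cast Nat.cast_pos.mpr (pow_pos (by omega : 0 < 2*k) n)
  -- log bounds
  have hlog3 : Real.log 3 ≤ 2*Real.log n := by
    have h34 : Real.log 3 ≤ Real.log 4 := Real.log_le_log (by norm_num) (by norm_num)
    have h4 : Real.log (4:ℝ) = 2 * Real.log 2 := by
      rw [show (4:ℝ) = 2^2 by norm_num, Real.log_pow]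
      push_cast; ring
    linarith
  have hlogD1 : Real.log (3*(n:ℝ)^(k+1)) ≤ ((k:ℝ)+3)*Real.log n := by
    rw [Real.log_mul (by norm_num) (by positivity), Real.log_pow]
    push_cast
    linarith
  have hlogD2 : Real.log (3*(n:ℝ)^(2*k+1)) ≤ (2*(k:ℝ)+3)*Real.log n := by
    rw [Real.log_mul (by norm_num) (by positivity), Real.log_pow]
    push_cast
    linarith
  -- the key gap inequality
  have hm0 : (0:ℝ) ≤ (m:ℝ) := Nat.cast_nonneg m
  have hgap : (25*(k:ℝ)+48)*Real.log n ≤ ((m:ℝ)*(7*dq1 k - 9*dq2 k))/8 := by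
    have h7 : dq1 k ≤ 7*dq1 k - 9*dq2 k := by linarith
    have h8 : (m:ℝ)/(4*(k:ℝ)) ≤ (m:ℝ)*dq1 k := by
      calc (m:ℝ)/(4*(k:ℝ)) = (m:ℝ)*(1/(4*(k:ℝ))) := by ring
        _ ≤ (m:ℝ)*dq1 k := mul_le_mul_of_nonneg_left hq1 hm0
    have h9 : (25*(k:ℝ)+48)*Real.log n*(32*(k:ℝ)) ≤ (m:ℝ) := by
      calc (25*(k:ℝ)+48)*Real.log n*(32*(k:ℝ)) = (800*(k:ℝ)^2 + 1536*(k:ℝ))*Real.log n := by ring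
        _ ≤ 3000*(k:ℝ)^2*Real.log n := by
            have hk2 : (k:ℝ) ≤ (k:ℝ)^2 := by nlinarith
            have hcoef : (800*(k:ℝ)^2 + 1536*(k:ℝ)) ≤ 3000*(k:ℝ)^2 := by nlinarith
            exact mul_le_mul_of_nonneg_right hcoef hL.le
        _ ≤ (m:ℝ) := hmge
    have h10 : (25*(k:ℝ)+48)*Real.log n ≤ (m:ℝ)/(32*(k:ℝ)) := by
      rw [le_div_iff₀ (by positivity)]
      linarith
    have h11 : (m:ℝ)/(32*(k:ℝ)) = ((m:ℝ)/(4*(k:ℝ)))/8 := by ring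
    have h12 : ((m:ℝ)/(4*(k:ℝ)))/8 ≤ ((m:ℝ)*dq1 k)/8 := by linarith
    have h13 : ((m:ℝ)*dq1 k)/8 ≤ ((m:ℝ)*(7*dq1 k - 9*dq2 k))/8 := by
      have := mul_le_mul_of_nonneg_left h7 hm0
      linarith
    linarith
  have hkeyL : ξ * (1/7) ≤ (m:ℝ) * dq1 k / 8 - Real.log (3*(n:ℝ)^(k+1)) := by
    have hmain : 9*((m:ℝ)*dq2 k/8 + (2*(k:ℝ)+3)*Real.log n)
        ≤ 7*((m:ℝ)*dq1 k/8 - ((k:ℝ)+3)*Real.log n) := by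
      linarith [hgap]
    rw [hxidef]
    linarith [hlogD1, hmain]
  have hkeyU : (m:ℝ) * dq2 k / 8 + Real.log (3*(n:ℝ)^(2*k+1)) ≤ ξ * (1/9) := by
    rw [hxidef]
    linarith [hlogD2]
  -- pair families
  set PS : Finset (Finset (Fin n) × Fin n) :=
    ((Finset.powersetCard k Finset.univ) ×ˢ Finset.univ).filter (fun p => p.2 ∈ p.1) with hPS
  set PB : Finset (Finset (Fin n) × Fin n) :=
    ((Finset.powersetCard (2*k) Finset.univ) ×ˢ Finset.univ).filter (fun p => p.2 ∈ p.1) with hPB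
  have hPcard : ∀ (t : ℕ) , (((((Finset.powersetCard t (Finset.univ : Finset (Fin n))) ×ˢ (Finset.univ : Finset (Fin n))).filter (fun p => p.2 ∈ p.1)).card : ℕ) : ℝ) ≤ (n:ℝ)^(t+1) := by
    intro t
    have h1 : (((Finset.powersetCard t (Finset.univ : Finset (Fin n))) ×ˢ (Finset.univ : Finset (Fin n))).filter (fun p => p.2 ∈ p.1)).card ≤ n^t * n := by
      calc (((Finset.powersetCard t (Finset.univ : Finset (Fin n))) ×ˢ (Finset.univ : Finset (Fin n))).filter (fun p => p.2 ∈ p.1)).card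
          ≤ ((Finset.powersetCard t (Finset.univ : Finset (Fin n))) ×ˢ (Finset.univ : Finset (Fin n))).card := Finset.card_filter_le _ _
        _ = (Finset.powersetCard t (Finset.univ : Finset (Fin n))).card * n := by
            rw [Finset.card_product, Finset.card_univ, Fintype.card_fin]
        _ ≤ n^t * n := by
            apply Nat.mul_le_mul_right
            rw [Finset.card_powersetCard, Finset.card_univ, Fintype.card_fin]
            exact Nat.choose_le_pow n t
    calc ((((Finset.powersetCard t (Finset.univ : Finset (Fin n))) ×ˢ (Finset.univ : Finset (Fin n))).filter (fun p => p.2 ∈ p.1)).card : ℝ)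
        ≤ ((n^t * n : ℕ) : ℝ) := by exact_mod_cast h1
      _ = (n:ℝ)^(t+1) := by push_cast; ring
  -- bad sets
  set BadL : (Finset (Fin n) × Fin n) → Finset (Fin m → (Fin n → Fin (2*k))) :=
    fun p => Finset.univ.filter (fun ω =>
      ((Finset.univ.filter (fun j => (ω j) p.2 = 0 ∧ ∀ b ∈ p.1, b ≠ p.2 → (ω j) b ≠ 0)).card : ℝ) ≤ ξ) with hBadL
  set BadU : (Finset (Fin n) × Fin n) → Finset (Fin m → (Fin n → Fin (2*k))) :=
    fun p => Finset.univ.filter (fun ω =>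
      ξ ≤ ((Finset.univ.filter (fun j => (ω j) p.2 = 0 ∧ ∀ b ∈ p.1, b ≠ p.2 → (ω j) b ≠ 0)).card : ℝ)) with hBadU
  have hsmall : ∀ p ∈ PS, ((BadL p).card : ℝ)
      ≤ ((Fintype.card (Fin n → Fin (2*k)) : ℝ))^m / (3*(n:ℝ)^(k+1)) := by
    intro p hp
    rw [hPS, Finset.mem_filter, Finset.mem_product, Finset.mem_powersetCard] at hp
    obtain ⟨⟨⟨_, hAcard⟩, _⟩, ha⟩ := hp
    rw [hBadL]
    apply chern_low m (fun g : Fin n → Fin (2*k) => g p.2 = 0 ∧ ∀ b ∈ p.1, b ≠ p.2 → g b ≠ 0)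
      hq1pos hq1le1 (by positivity) hxi0 hTpos ?_ hkeyL
    rw [good_count p.1 p.2 ha, hAcard, hTcard, dq1]
    exact cast_good n k k hk hk (by omega)
  have hbig : ∀ p ∈ PB, ((BadU p).card : ℝ)
      ≤ ((Fintype.card (Fin n → Fin (2*k)) : ℝ))^m / (3*(n:ℝ)^(2*k+1)) := by
    intro p hp
    rw [hPB, Finset.mem_filter, Finset.mem_product, Finset.mem_powersetCard] at hp
    obtain ⟨⟨⟨_, hAcard⟩, _⟩, ha⟩ := hp
    rw [hBadU]
    apply chern_up m (fun g : Fin n → Fin (2*k) => g p.2 = 0 ∧ ∀ b ∈ p.1, b ≠ p.2 → g b ≠ 0)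
      hq2pos (by positivity) hxi0 ?_ hkeyU
    rw [good_count p.1 p.2 ha, hAcard, hTcard, dq2]
    exact cast_good n k (2*k) hk (by omega) (by omega)
  -- union bound and existence of a good ω
  obtain ⟨ω, hω⟩ : ∃ ω : Fin m → (Fin n → Fin (2*k)), ω ∉ PS.biUnion BadL ∪ PB.biUnion BadU := by
    by_contra hcon
    push_neg at hcon
    have hsub : (Finset.univ : Finset (Fin m → (Fin n → Fin (2*k)))) ⊆ PS.biUnion BadL ∪ PB.biUnion BadU :=
      fun ω _ => hcon ω
    have hle := Finset.card_le_card hsub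
    rw [Finset.card_univ, Fintype.card_fun, Fintype.card_fin] at hle
    have hleR : ((Fintype.card (Fin n → Fin (2*k)) : ℝ))^m
        ≤ ((PS.biUnion BadL ∪ PB.biUnion BadU).card : ℝ) := by
      rw [← Nat.cast_pow]
      exact_mod_cast hle
    have h1 : ((PS.biUnion BadL ∪ PB.biUnion BadU).card : ℝ)
        ≤ ((PS.biUnion BadL).card : ℝ) + ((PB.biUnion BadU).card : ℝ) := by
      exact_mod_cast Finset.card_union_le _ _
    have h2 : ((PS.biUnion BadL).card : ℝ) ≤ ∑ p ∈ PS, ((BadL p).card : ℝ) := by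
      exact_mod_cast Finset.card_biUnion_le
    have h3 : ((PB.biUnion BadU).card : ℝ) ≤ ∑ p ∈ PB, ((BadU p).card : ℝ) := by
      exact_mod_cast Finset.card_biUnion_le
    have h4 : ∑ p ∈ PS, ((BadL p).card : ℝ)
        ≤ (n:ℝ)^(k+1) * (((Fintype.card (Fin n → Fin (2*k)) : ℝ))^m / (3*(n:ℝ)^(k+1))) := by
      calc ∑ p ∈ PS, ((BadL p).card : ℝ)
          ≤ ∑ _p ∈ PS, ((Fintype.card (Fin n → Fin (2*k)) : ℝ))^m / (3*(n:ℝ)^(k+1)) :=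
            Finset.sum_le_sum hsmall
        _ = (PS.card : ℝ) * (((Fintype.card (Fin n → Fin (2*k)) : ℝ))^m / (3*(n:ℝ)^(k+1))) := by
            rw [Finset.sum_const, nsmul_eq_mul]
        _ ≤ (n:ℝ)^(k+1) * (((Fintype.card (Fin n → Fin (2*k)) : ℝ))^m / (3*(n:ℝ)^(k+1))) := by
            apply mul_le_mul_of_nonneg_right _ (by positivity)
            rw [hPS]
            exact hPcard k
    have h5 : ∑ p ∈ PB, ((BadU p).card : ℝ)
        ≤ (n:ℝ)^(2*k+1) * (((Fintype.card (Fin n → Fin (2*k)) : ℝ))^m / (3*(n:ℝ)^(2*k+1))) := by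
      calc ∑ p ∈ PB, ((BadU p).card : ℝ)
          ≤ ∑ _p ∈ PB, ((Fintype.card (Fin n → Fin (2*k)) : ℝ))^m / (3*(n:ℝ)^(2*k+1)) :=
            Finset.sum_le_sum hbig
        _ = (PB.card : ℝ) * (((Fintype.card (Fin n → Fin (2*k)) : ℝ))^m / (3*(n:ℝ)^(2*k+1))) := by
            rw [Finset.sum_const, nsmul_eq_mul]
        _ ≤ (n:ℝ)^(2*k+1) * (((Fintype.card (Fin n → Fin (2*k)) : ℝ))^m / (3*(n:ℝ)^(2*k+1))) := by
            apply mul_le_mul_of_nonneg_right _ (by positivity)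
            rw [hPB]
            exact hPcard (2*k)
    have h6 : (n:ℝ)^(k+1) * (((Fintype.card (Fin n → Fin (2*k)) : ℝ))^m / (3*(n:ℝ)^(k+1)))
        = ((Fintype.card (Fin n → Fin (2*k)) : ℝ))^m / 3 := by
      field_simp
    have h7 : (n:ℝ)^(2*k+1) * (((Fintype.card (Fin n → Fin (2*k)) : ℝ))^m / (3*(n:ℝ)^(2*k+1)))
        = ((Fintype.card (Fin n → Fin (2*k)) : ℝ))^m / 3 := by
      field_simp
    have hTm : (0:ℝ) < ((Fintype.card (Fin n → Fin (2*k)) : ℝ))^m := by positivity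
    rw [h6] at h4
    rw [h7] at h5
    linarith
  -- decode the good ω
  have hω1 : ∀ p ∈ PS, ω ∉ BadL p := by
    intro p hp hbad
    exact hω (Finset.mem_union_left _ (Finset.mem_biUnion.mpr ⟨p, hp, hbad⟩))
  have hω2 : ∀ p ∈ PB, ω ∉ BadU p := by
    intro p hp hbad
    exact hω (Finset.mem_union_right _ (Finset.mem_biUnion.mpr ⟨p, hp, hbad⟩))
  have hlink : ∀ (A : Finset (Fin n)) (a : Fin n), a ∈ A → ∀ j : Fin m,
      ((Finset.univ.filter (fun x => ω j x = 0)) ∩ A = {a} ↔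
        (ω j a = 0 ∧ ∀ b ∈ A, b ≠ a → ω j b ≠ 0)) := by
    intro A a ha j
    constructor
    · intro h
      have h1 : ω j a = 0 := by
        have hmem : a ∈ (Finset.univ.filter (fun x => ω j x = 0)) ∩ A := by
          rw [h]; exact Finset.mem_singleton_self a
        rw [Finset.mem_inter, Finset.mem_filter] at hmem
        exact hmem.1.2
      refine ⟨h1, fun b hb hba hb0 => ?_⟩
      have hmem : b ∈ (Finset.univ.filter (fun x => ω j x = 0)) ∩ A := by
        rw [Finset.mem_inter, Finset.mem_filter]
        exact ⟨⟨Finset.mem_univ b, hb0⟩, hb⟩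
      rw [h, Finset.mem_singleton] at hmem
      exact hba hmem
    · rintro ⟨h1, h2⟩
      ext x
      rw [Finset.mem_inter, Finset.mem_filter, Finset.mem_singleton]
      constructor
      · rintro ⟨⟨_, hx0⟩, hxA⟩
        by_contra hxa
        exact h2 x hxA hxa hx0
      · rintro rfl
        exact ⟨⟨Finset.mem_univ _, h1⟩, ha⟩
  have hcount : ∀ (A : Finset (Fin n)) (a : Fin n), a ∈ A →
      (Finset.univ.filter (fun j : Fin m => (Finset.univ.filter (fun x => ω j x = 0)) ∩ A = {a}))
        = (Finset.univ.filter (fun j : Fin m => ω j a = 0 ∧ ∀ b ∈ A, b ≠ a → ω j b ≠ 0)) := by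
    intro A a ha
    apply Finset.filter_congr
    intro j _
    exact hlink A a ha j
  refine ⟨m, fun j => Finset.univ.filter (fun x => ω j x = 0), ξ, hmle, ?_, ?_⟩
  · intro A hA a ha
    obtain ⟨A', hAA', hA'card⟩ := Finset.exists_superset_card_eq hA (by rw [Fintype.card_fin]; omega)
    have ha' : a ∈ A' := hAA' ha
    have hpmem : (A', a) ∈ PS := by
      rw [hPS, Finset.mem_filter, Finset.mem_product, Finset.mem_powersetCard]
      exact ⟨⟨⟨Finset.subset_univ _, hA'card⟩, Finset.mem_univ a⟩, ha'⟩
    have hnb := hω1 (A', a) hpmem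
    rw [hBadL, Finset.mem_filter] at hnb
    push_neg at hnb
    have hgt := hnb (Finset.mem_univ ω)
    have hsub : (Finset.univ.filter (fun j : Fin m => ω j a = 0 ∧ ∀ b ∈ A', b ≠ a → ω j b ≠ 0))
        ⊆ (Finset.univ.filter (fun j : Fin m => ω j a = 0 ∧ ∀ b ∈ A, b ≠ a → ω j b ≠ 0)) := by
      intro j hj
      rw [Finset.mem_filter] at hj ⊢
      exact ⟨hj.1, hj.2.1, fun b hb hba => hj.2.2 b (hAA' hb) hba⟩
    have hle := Finset.card_le_card hsub
    show ξ < ((Finset.univ.filter (fun j : Fin m =>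
      (Finset.univ.filter (fun x => ω j x = 0)) ∩ A = {a})).card : ℝ)
    rw [hcount A a ha]
    calc ξ < _ := hgt
      _ ≤ _ := by exact_mod_cast hle
  · intro A hA a ha
    obtain ⟨A', hsub1, hsub2, hA'card⟩ := Finset.exists_subsuperset_card_eq
      (Finset.singleton_subset_iff.mpr ha) (by simp; omega) hA
    have ha' : a ∈ A' := hsub1 (Finset.mem_singleton_self a)
    have hpmem : (A', a) ∈ PB := by
      rw [hPB, Finset.mem_filter, Finset.mem_product, Finset.mem_powersetCard]
      exact ⟨⟨⟨Finset.subset_univ _, hA'card⟩, Finset.mem_univ a⟩, ha'⟩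
    have hnb := hω2 (A', a) hpmem
    rw [hBadU, Finset.mem_filter] at hnb
    push_neg at hnb
    have hlt := hnb (Finset.mem_univ ω)
    have hsub : (Finset.univ.filter (fun j : Fin m => ω j a = 0 ∧ ∀ b ∈ A, b ≠ a → ω j b ≠ 0))
        ⊆ (Finset.univ.filter (fun j : Fin m => ω j a = 0 ∧ ∀ b ∈ A', b ≠ a → ω j b ≠ 0)) := by
      intro j hj
      rw [Finset.mem_filter] at hj ⊢
      exact ⟨hj.1, hj.2.1, fun b hb hba => hj.2.2 b (hsub2 hb) hba⟩
    have hle := Finset.card_le_card hsub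
    show ((Finset.univ.filter (fun j : Fin m =>
      (Finset.univ.filter (fun x => ω j x = 0)) ∩ A = {a})).card : ℝ) < ξ
    rw [hcount A a ha]
    calc ((Finset.univ.filter (fun j : Fin m => ω j a = 0 ∧ ∀ b ∈ A, b ≠ a → ω j b ≠ 0)).card : ℝ)
        ≤ ((Finset.univ.filter (fun j : Fin m => ω j a = 0 ∧ ∀ b ∈ A', b ≠ a → ω j b ≠ 0)).card : ℝ) := by
          exact_mod_cast hle
      _ < ξ := hlt
end

section
/- There exist constants c, C > 0 such that for all n and k (powers of 2, k ≤ n) and any s ≥ C·k²·log n, there exists an amortizing selector family {S_{ij}} with parameters n, k, s succeeding at cumulative rate c: for each j ∈ {1,2,4,...,k/2}, each A ⊆ {0,...,n-1} with j/2 ≤ |A| ≤ 2j, and each v ∈ A, there are at least (c/|A|)·s indices i ∈ {1,...,s} such that v ∈ S_{ij} and A ∩ (S_{i(j/2)} ∪ S_{ij} ∪ S_{i(2j)}) = {v}. -/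
open Finset

open Finset

private lemma card_interval_filter (M a b : ℕ) (hbM : b ≤ M) :
    ((univ : Finset (Fin M)).filter (fun x => a ≤ x.val ∧ x.val < b)).card = b - a := by
  rw [← Nat.card_Ico a b]
  apply Finset.card_bij (fun (x : Fin M) _ => x.val)
  · intro x hx
    simp only [mem_filter, mem_univ, true_and] at hx
    simpa only [Finset.mem_Ico] using hx
  · intro x _ y _ h
    exact Fin.val_injective h
  · intro y hy
    simp only [Finset.mem_Ico] at hy
    exact ⟨⟨y, lt_of_lt_of_le hy.2 hbM⟩, by simp [hy.1, hy.2], rfl⟩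


set_option maxHeartbeats 1000000 in
private lemma tail_bound {Ω₀ : Type*} [Fintype Ω₀] (P : Ω₀ → Prop) [DecidablePred P]
    (s m : ℕ) :
    (((univ : Finset (Fin s → Ω₀)).filter
        (fun ω => ((univ : Finset (Fin s)).filter (fun i => P (ω i))).card ≤ m)).card : ℝ)
      ≤ 2 ^ m * ((Fintype.card Ω₀ : ℝ) - (((univ : Finset Ω₀).filter P).card : ℝ) / 2) ^ s := by
  classical
  set N := Fintype.card Ω₀ with hN
  set g := ((univ : Finset Ω₀).filter P).card with hg
  have hgN : g ≤ N := by
    simpa [hN, hg] using Finset.card_filter_le (univ : Finset Ω₀) P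
  have h1 : ∀ ω : Fin s → Ω₀,
      ((1:ℝ)/2) ^ (((univ : Finset (Fin s)).filter (fun i => P (ω i))).card)
        = ∏ i : Fin s, (if P (ω i) then (1:ℝ)/2 else 1) := by
    intro ω
    rw [Finset.prod_ite, Finset.prod_const, Finset.prod_const, one_pow, mul_one]
  have hx : ∑ x ∈ (univ : Finset Ω₀), (if P x then (1:ℝ)/2 else 1)
      = (N : ℝ) - (g : ℝ)/2 := by
    rw [Finset.sum_ite, Finset.sum_const, Finset.sum_const]
    have hneg : ((univ : Finset Ω₀).filter (fun x => ¬ P x)).card = N - g := by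
      have h := Finset.card_filter_add_card_filter_not
        (s := (univ : Finset Ω₀)) (p := P)
      rw [Finset.card_univ] at h
      omega
    rw [hneg, ← hg, nsmul_eq_mul, nsmul_eq_mul, Nat.cast_sub hgN]
    push_cast
    ring
  have hsum : ∑ ω : Fin s → Ω₀,
      ((1:ℝ)/2) ^ (((univ : Finset (Fin s)).filter (fun i => P (ω i))).card)
      = ((N : ℝ) - (g : ℝ)/2) ^ s := by
    have h2 : ∑ ω : Fin s → Ω₀,
        ((1:ℝ)/2) ^ (((univ : Finset (Fin s)).filter (fun i => P (ω i))).card)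
        = ∑ ω : Fin s → Ω₀, ∏ i : Fin s, (if P (ω i) then (1:ℝ)/2 else 1) :=
      Finset.sum_congr rfl fun ω _ => h1 ω
    rw [h2, ← Fintype.sum_pow (fun x => if P x then (1:ℝ)/2 else 1) s, hx]
  have key : ∀ ω ∈ (univ : Finset (Fin s → Ω₀)).filter
      (fun ω => ((univ : Finset (Fin s)).filter (fun i => P (ω i))).card ≤ m),
      (1:ℝ) ≤ 2 ^ m * ((1:ℝ)/2) ^ (((univ : Finset (Fin s)).filter (fun i => P (ω i))).card) := by
    intro ω hω
    rw [Finset.mem_filter] at hω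
    have hle : ((1:ℝ)/2) ^ m
        ≤ ((1:ℝ)/2) ^ (((univ : Finset (Fin s)).filter (fun i => P (ω i))).card) :=
      pow_le_pow_of_le_one (by norm_num) (by norm_num) hω.2
    have h2m : (0:ℝ) ≤ 2 ^ m := by positivity
    have hone : (2:ℝ) ^ m * ((1:ℝ)/2) ^ m = 1 := by
      rw [← mul_pow]; norm_num
    calc (1:ℝ) = 2 ^ m * ((1:ℝ)/2) ^ m := hone.symm
      _ ≤ _ := mul_le_mul_of_nonneg_left hle h2m
  have step1 : (((univ : Finset (Fin s → Ω₀)).filter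
        (fun ω => ((univ : Finset (Fin s)).filter (fun i => P (ω i))).card ≤ m)).card : ℝ)
      ≤ ∑ ω ∈ (univ : Finset (Fin s → Ω₀)).filter
          (fun ω => ((univ : Finset (Fin s)).filter (fun i => P (ω i))).card ≤ m),
          2 ^ m * ((1:ℝ)/2) ^ (((univ : Finset (Fin s)).filter (fun i => P (ω i))).card) := by
    have hc : (((univ : Finset (Fin s → Ω₀)).filter
        (fun ω => ((univ : Finset (Fin s)).filter (fun i => P (ω i))).card ≤ m)).card : ℝ)
        = ∑ _ω ∈ (univ : Finset (Fin s → Ω₀)).filter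
          (fun ω => ((univ : Finset (Fin s)).filter (fun i => P (ω i))).card ≤ m), (1:ℝ) := by
      rw [Finset.sum_const, nsmul_eq_mul, mul_one]
    rw [hc]
    exact Finset.sum_le_sum key
  have step2 : ∑ ω ∈ (univ : Finset (Fin s → Ω₀)).filter
          (fun ω => ((univ : Finset (Fin s)).filter (fun i => P (ω i))).card ≤ m),
          2 ^ m * ((1:ℝ)/2) ^ (((univ : Finset (Fin s)).filter (fun i => P (ω i))).card)
      ≤ ∑ ω : Fin s → Ω₀,
          2 ^ m * ((1:ℝ)/2) ^ (((univ : Finset (Fin s)).filter (fun i => P (ω i))).card) :=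
    Finset.sum_le_sum_of_subset_of_nonneg (Finset.subset_univ _)
      (fun ω _ _ => by positivity)
  have step3 : ∑ ω : Fin s → Ω₀,
        2 ^ m * ((1:ℝ)/2) ^ (((univ : Finset (Fin s)).filter (fun i => P (ω i))).card)
      = 2 ^ m * ((N : ℝ) - (g : ℝ)/2) ^ s := by
    rw [← Finset.mul_sum, hsum]
  linarith [step1, step2, step3.le, step3.ge]


set_option maxHeartbeats 1000000 in
private lemma good_card_lower (n k j : ℕ) (A : Finset (Fin n)) (v : Fin n) (hv : v ∈ A)
    (hjd : j * (k / j) = k) (hj1 : 1 ≤ j) (hd1 : 1 ≤ k / j)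
    (hja : j ≤ 2 * A.card) (haj : A.card ≤ 2 * j) :
    ((16 * k : ℕ) ^ n : ℝ) / (64 * A.card) ≤
      (((univ : Finset (Fin n → Fin (16 * k))).filter
        (fun f => (2*k - 2*(k/j) ≤ (f v).val ∧ (f v).val < 2*k - k/j) ∧
          ∀ u ∈ A, u ≠ v → ¬(2*k - 4*(k/j) ≤ (f u).val ∧ (f u).val < 2*k))).card : ℝ) := by
  classical
  set d := k / j with hd
  have hk1 : 1 ≤ k := hjd ▸ Nat.mul_le_mul hj1 hd1
  have hdk : d ≤ k := Nat.div_le_self k j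
  set M := 16 * k with hM
  set Iset := (univ : Finset (Fin M)).filter (fun x => 2*k - 2*d ≤ x.val ∧ x.val < 2*k - d)
    with hIset
  set Cset := (univ : Finset (Fin M)).filter
      (fun x => ¬(2*k - 4*d ≤ x.val ∧ x.val < 2*k)) with hCset
  have hIcard : Iset.card = d := by
    rw [hIset, card_interval_filter M _ _ (by omega)]
    omega
  have hBcard : ((univ : Finset (Fin M)).filter
      (fun x => 2*k - 4*d ≤ x.val ∧ x.val < 2*k)).card ≤ 4*d := by
    rw [card_interval_filter M _ _ (by omega)]
    omega
  have hCcard : M - 4*d ≤ Cset.card ∧ Cset.card ≤ M := by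
    have h := Finset.card_filter_add_card_filter_not
      (s := (univ : Finset (Fin M))) (p := fun x => 2*k - 4*d ≤ x.val ∧ x.val < 2*k)
    rw [Finset.card_univ, Fintype.card_fin] at h
    rw [hCset]
    omega
  set T : Fin n → Finset (Fin M) :=
    fun x => if x = v then Iset else if x ∈ A.erase v then Cset else univ with hT
  have hfilter_eq : ((univ : Finset (Fin n → Fin M)).filter
      (fun f => (2*k - 2*d ≤ (f v).val ∧ (f v).val < 2*k - d) ∧
        ∀ u ∈ A, u ≠ v → ¬(2*k - 4*d ≤ (f u).val ∧ (f u).val < 2*k)))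
      = Fintype.piFinset T := by
    ext f
    simp only [mem_filter, mem_univ, true_and, Fintype.mem_piFinset]
    constructor
    · rintro ⟨hfv, hfu⟩ x
      by_cases hxv : x = v
      · subst hxv; simp only [hT, if_pos rfl, hIset, mem_filter, mem_univ, true_and]; exact hfv
      · by_cases hxA : x ∈ A.erase v
        · have hx := hfu x (Finset.mem_of_mem_erase hxA) (Finset.ne_of_mem_erase hxA)
          simp only [hT, if_neg hxv, if_pos hxA, hCset, mem_filter, mem_univ, true_and]
          exact hx
        · have hxA' : x ∉ A := fun h => hxA (Finset.mem_erase.2 ⟨hxv, h⟩)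
          simp [hT, hxv, hxA']
    · intro h
      constructor
      · have hh := h v
        simp only [hT, if_pos rfl, hIset, mem_filter, mem_univ, true_and] at hh
        exact hh
      · intro u hu hune
        have hmem : u ∈ A.erase v := Finset.mem_erase.2 ⟨hune, hu⟩
        have hh := h u
        simp only [hT, if_neg hune, if_pos hmem, hCset, mem_filter, mem_univ, true_and] at hh
        exact hh
  rw [hfilter_eq, Fintype.card_piFinset]
  have ha1 : 1 ≤ A.card := Finset.card_pos.2 ⟨v, hv⟩
  have han : A.card ≤ n := by
    simpa using Finset.card_le_univ A
  have h1 : ∏ x ∈ A, (T x).card = Iset.card * Cset.card ^ (A.card - 1) := by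
    rw [← Finset.mul_prod_erase A _ hv]
    congr 1
    · simp [hT]
    · rw [Finset.prod_congr rfl (fun x hx => ?_), Finset.prod_const,
        Finset.card_erase_of_mem hv]
      simp [hT, Finset.ne_of_mem_erase hx, hx, Finset.mem_of_mem_erase hx]
  have h2 : ∏ x ∈ Aᶜ, (T x).card = M ^ (n - A.card) := by
    rw [Finset.prod_congr rfl (fun x hx => ?_), Finset.prod_const,
      Finset.card_compl, Fintype.card_fin]
    have hxA : x ∉ A := by simpa using hx
    have hxv : x ≠ v := fun h => hxA (h ▸ hv)
    have hxe : x ∉ A.erase v := fun h => hxA (Finset.mem_of_mem_erase h)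
    simp [hT, hxv, hxA, hxe, Finset.card_univ]
  have hprod : ∏ x : Fin n, (T x).card = Iset.card * Cset.card ^ (A.card - 1) * M ^ (n - A.card) := by
    rw [← Finset.prod_mul_prod_compl A, h1, h2]
  rw [hprod, hIcard]
  -- now the real-number inequality
  set a := A.card with haA
  have hjR : (1:ℝ) ≤ (j:ℝ) := by exact_mod_cast hj1
  have hdR : (1:ℝ) ≤ (d:ℝ) := by exact_mod_cast hd1
  have haR : (1:ℝ) ≤ (a:ℝ) := by exact_mod_cast ha1
  have hMR : (M:ℝ) = 16 * (j:ℝ) * (d:ℝ) := by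
    rw [hM, ← hjd]; push_cast; ring
  have hjaR : (j:ℝ) ≤ 2 * (a:ℝ) := by exact_mod_cast hja
  have ha1R : ((a - 1 : ℕ) : ℝ) ≤ 2 * (j:ℝ) := by
    have : a - 1 ≤ 2 * j := by omega
    exact_mod_cast this
  have hCR : (M:ℝ) - 4*(d:ℝ) ≤ (Cset.card : ℝ) := by
    have h4d : 4*d ≤ M := by omega
    have := hCcard.1
    have h5 : ((M - 4*d : ℕ) : ℝ) ≤ (Cset.card : ℝ) := by exact_mod_cast this
    rw [Nat.cast_sub h4d] at h5
    push_cast at h5 ⊢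
    linarith

  have hM4d : (M:ℝ) - 4*(d:ℝ) = (M:ℝ) * (1 - 1/(4*(j:ℝ))) := by
    rw [hMR]
    field_simp
    ring
  have hjpos : (0:ℝ) < 4*(j:ℝ) := by linarith
  have bern : (1:ℝ)/2 ≤ (1 - 1/(4*(j:ℝ))) ^ (a - 1) := by
    have h2 : (-2:ℝ) ≤ -(1/(4*(j:ℝ))) := by
      have : 1/(4*(j:ℝ)) ≤ 1/4 := by
        apply div_le_div_of_nonneg_left (by norm_num) (by norm_num)
        linarith
      linarith
    have hb := one_add_mul_le_pow h2 (a - 1)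
    have hfrac : ((a - 1 : ℕ):ℝ) * (1/(4*(j:ℝ))) ≤ 1/2 := by
      have h5 : ((a-1:ℕ):ℝ) * (1/(4*(j:ℝ))) ≤ 2*(j:ℝ) * (1/(4*(j:ℝ))) :=
        mul_le_mul_of_nonneg_right ha1R (by positivity)
      have heq : 2*(j:ℝ) * (1/(4*(j:ℝ))) = 1/2 := by
        field_simp
        ring
      linarith
    have : 1 + ((a-1:ℕ):ℝ) * -(1/(4*(j:ℝ))) ≤ (1 + -(1/(4*(j:ℝ)))) ^ (a-1) := hb
    have h3 : (1:ℝ)/2 ≤ 1 + ((a-1:ℕ):ℝ) * -(1/(4*(j:ℝ))) := by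
      have := hfrac
      nlinarith
    calc (1:ℝ)/2 ≤ 1 + ((a-1:ℕ):ℝ) * -(1/(4*(j:ℝ))) := h3
      _ ≤ (1 + -(1/(4*(j:ℝ)))) ^ (a-1) := hb
      _ = (1 - 1/(4*(j:ℝ))) ^ (a-1) := by ring_nf
  have hMpow : (0:ℝ) ≤ (M:ℝ)^(a-1) := by positivity
  have hMpos : (0:ℝ) < (M:ℝ) := by rw [hMR]; nlinarith
  have hcast : (↑(d * Cset.card ^ (a - 1) * M ^ (n - a)) : ℝ)
      = (d:ℝ) * (Cset.card:ℝ)^(a-1) * (M:ℝ)^(n-a) := by push_cast; ring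
  rw [hcast]
  have hMn : ((M:ℕ)^n : ℝ) = (M:ℝ)^a * (M:ℝ)^(n-a) := by
    push_cast
    rw [← pow_add, Nat.add_sub_cancel' han]
  have hkey : (M:ℝ)^a / (64*(a:ℝ)) ≤ (d:ℝ) * ((M:ℝ) - 4*(d:ℝ))^(a-1) := by
    have hMa : (M:ℝ)^a = (M:ℝ) * (M:ℝ)^(a-1) := by
      rw [← pow_succ']
      congr 1
      omega
    have hstep : (M:ℝ)/(64*(a:ℝ)) ≤ (d:ℝ)/2 := by
      rw [div_le_div_iff₀ (by linarith) (by norm_num)]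
      rw [hMR]
      nlinarith
    have hpow2 : ((M:ℝ) - 4*(d:ℝ))^(a-1) = (M:ℝ)^(a-1) * (1 - 1/(4*(j:ℝ)))^(a-1) := by
      rw [hM4d, mul_pow]
    calc (M:ℝ)^a / (64*(a:ℝ)) = ((M:ℝ)/(64*(a:ℝ))) * (M:ℝ)^(a-1) := by
          rw [hMa]; ring
      _ ≤ ((d:ℝ)/2) * (M:ℝ)^(a-1) := mul_le_mul_of_nonneg_right hstep hMpow
      _ ≤ (d:ℝ) * (((M:ℝ))^(a-1) * (1 - 1/(4*(j:ℝ)))^(a-1)) := by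
          have h5 : (M:ℝ)^(a-1) * (1/2) ≤ (M:ℝ)^(a-1) * (1 - 1/(4*(j:ℝ)))^(a-1) :=
            mul_le_mul_of_nonneg_left bern hMpow
          have h6 := mul_le_mul_of_nonneg_left h5 (by linarith : (0:ℝ) ≤ (d:ℝ))
          calc (d:ℝ)/2 * (M:ℝ)^(a-1) = (d:ℝ) * ((M:ℝ)^(a-1) * (1/2)) := by ring
            _ ≤ _ := h6
      _ = (d:ℝ) * ((M:ℝ) - 4*(d:ℝ))^(a-1) := by rw [hpow2]
  calc ((M:ℕ)^n : ℝ) / (64*(a:ℝ)) = ((M:ℝ)^a / (64*(a:ℝ))) * (M:ℝ)^(n-a) := by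
        rw [hMn]; ring
    _ ≤ ((d:ℝ) * ((M:ℝ) - 4*(d:ℝ))^(a-1)) * (M:ℝ)^(n-a) := by
        apply mul_le_mul_of_nonneg_right hkey (by positivity)
    _ ≤ (d:ℝ) * (Cset.card:ℝ)^(a-1) * (M:ℝ)^(n-a) := by
        have hnn : (0:ℝ) ≤ (M:ℝ) - 4*(d:ℝ) := by
          rw [hM4d]
          have : 1/(4*(j:ℝ)) ≤ 1 := by
            rw [div_le_one hjpos]; linarith
          nlinarith
        have h5 := pow_le_pow_left₀ hnn hCR (a-1)
        have hMna : (0:ℝ) ≤ (M:ℝ)^(n-a) := by positivity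
        have h7 : (d:ℝ) * ((M:ℝ) - 4*(d:ℝ))^(a-1) ≤ (d:ℝ) * (Cset.card:ℝ)^(a-1) :=
          mul_le_mul_of_nonneg_left h5 (by linarith)
        exact mul_le_mul_of_nonneg_right h7 hMna

set_option maxHeartbeats 3200000 in
/-- Existence of amortizing selector families. There are constants `c, C > 0` such that for
every `n` and every power of two `k ≤ n`, and any `s ≥ C·k²·log n`, there is a family
`S i j ⊆ {0,…,n-1}` (for `1 ≤ i ≤ s` and `j` a power of 2 up to `k`, with `S i (1/2) := ∅`
encoded by the `if j = 1` convention) succeeding at cumulative rate `c`: for each power of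
two `j ≤ k/2`, each `A` with `j/2 ≤ |A| ≤ 2j`, and each `v ∈ A`, there are at least
`(c/|A|)·s` indices `i < s` with `v ∈ S i j` and
`A ∩ (S_{i(j/2)} ∪ S_{ij} ∪ S_{i(2j)}) = {v}`. -/
theorem amortizing_selector_exists :
    ∃ c C : ℝ, 0 < c ∧ 0 < C ∧
      ∀ n k : ℕ, (∃ t : ℕ, k = 2 ^ t) → k ≤ n →
        ∀ s : ℕ, C * (k : ℝ) ^ 2 * Real.log n ≤ s →
          ∃ S : ℕ → ℕ → Finset (Fin n),
            ∀ j : ℕ, (∃ t : ℕ, j = 2 ^ t) → 2 * j ≤ k →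
              ∀ A : Finset (Fin n), j ≤ 2 * A.card → A.card ≤ 2 * j → ∀ v ∈ A,
                (c / A.card) * s ≤
                  (((Finset.range s).filter (fun i =>
                      v ∈ S i j ∧
                      A ∩ ((if j = 1 then (∅ : Finset (Fin n)) else S i (j / 2)) ∪ S i j ∪
                          S i (2 * j)) = {v})).card : ℝ) := by
  classical
  refine ⟨1/256, 1000000, by norm_num, by norm_num, ?_⟩
  rintro n k ⟨t, hkt⟩ hkn s hs
  by_cases hk2 : k ≤ 1
  · refine ⟨fun _ _ => (∅ : Finset (Fin n)), ?_⟩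
    rintro j ⟨b, rfl⟩ h2j
    exfalso
    have := Nat.one_le_two_pow (n := b)
    omega
  push_neg at hk2
  have hn2 : 2 ≤ n := le_trans hk2 hkn
  have hk1 : 1 ≤ k := by omega
  have hN₀ : Fintype.card (Fin n → Fin (16*k)) = (16*k)^n := by
    simp [Fintype.card_fun]
  set N₀ : ℕ := Fintype.card (Fin n → Fin (16*k)) with hN₀def
  have hN₀pos : 0 < N₀ := Fintype.card_pos_iff.2 ⟨fun _ => ⟨0, by omega⟩⟩
  set E : Finset (ℕ × Finset (Fin n) × Fin n) :=
    ((Finset.range (k+1)) ×ˢ ((univ : Finset (Finset (Fin n))) ×ˢ (univ : Finset (Fin n)))).filter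
      (fun e => (∃ b, e.1 = 2^b) ∧ 2*e.1 ≤ k ∧ e.1 ≤ 2*e.2.1.card ∧ e.2.1.card ≤ 2*e.1 ∧
        e.2.2 ∈ e.2.1) with hE
  set Bad : ℕ × Finset (Fin n) × Fin n → Finset (Fin s → Fin n → Fin (16*k)) :=
    fun e => (univ : Finset (Fin s → Fin n → Fin (16*k))).filter
      (fun ω => ((univ : Finset (Fin s)).filter
          (fun i => (2*k - 2*(k/e.1) ≤ ((ω i) e.2.2).val ∧ ((ω i) e.2.2).val < 2*k - k/e.1) ∧
            ∀ u ∈ e.2.1, u ≠ e.2.2 →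
              ¬(2*k - 4*(k/e.1) ≤ ((ω i) u).val ∧ ((ω i) u).val < 2*k))).card
        ≤ Nat.floor ((1/256 : ℝ) / (e.2.1.card : ℝ) * s)) with hBad
  -- Step A : each bad set is small
  have stepA : ∀ e ∈ E, ((Bad e).card : ℝ) ≤ (N₀:ℝ)^s * Real.exp (-(s:ℝ)/(256*k)) := by
    rintro ⟨j, A, v⟩ he
    rw [hE, Finset.mem_filter] at he
    obtain ⟨-, hbb, h2j, hja, haj, hv⟩ := he
    obtain ⟨b, hjb⟩ := hbb
    replace hjb : j = 2^b := hjb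
    replace h2j : 2*j ≤ k := h2j
    replace hja : j ≤ 2*A.card := hja
    replace haj : A.card ≤ 2*j := haj
    replace hv : v ∈ A := hv
    have hj1 : 1 ≤ j := by
      have := Nat.one_le_two_pow (n := b)
      omega
    have hbt : b + 1 ≤ t := by
      have h1 : (2:ℕ)^(b+1) ≤ 2^t := by
        rw [pow_succ]
        omega
      exact (Nat.pow_le_pow_iff_right (by norm_num)).1 h1
    have hd1 : 1 ≤ k / j := by
      rw [hjb, hkt, Nat.pow_div (by omega) (by norm_num)]
      exact Nat.one_le_two_pow
    have hjd : j * (k / j) = k := by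
      rw [hjb, hkt, Nat.pow_div (by omega) (by norm_num), ← pow_add]
      congr 1
      omega
    have ha1 : 1 ≤ A.card := Finset.card_pos.2 ⟨v, hv⟩
    have hak : A.card ≤ k := by omega
    have haR : (1:ℝ) ≤ (A.card:ℝ) := by exact_mod_cast ha1
    have hakR : (A.card:ℝ) ≤ (k:ℝ) := by exact_mod_cast hak
    have hglow := good_card_lower n k j A v hv hjd hj1 hd1 hja haj
    have htb := tail_bound (P := fun f : Fin n → Fin (16*k) =>
        (2*k - 2*(k/j) ≤ (f v).val ∧ (f v).val < 2*k - k/j) ∧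
        ∀ u ∈ A, u ≠ v → ¬(2*k - 4*(k/j) ≤ (f u).val ∧ (f u).val < 2*k)) s
        (Nat.floor ((1/256 : ℝ) / (A.card : ℝ) * s))
    set g := (((univ : Finset (Fin n → Fin (16*k)))).filter (fun f : Fin n → Fin (16*k) =>
        (2*k - 2*(k/j) ≤ (f v).val ∧ (f v).val < 2*k - k/j) ∧
        ∀ u ∈ A, u ≠ v → ¬(2*k - 4*(k/j) ≤ (f u).val ∧ (f u).val < 2*k))).card with hgdef
    have hgN : g ≤ N₀ := by
      rw [hgdef, hN₀def, ← Finset.card_univ]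
      exact Finset.card_filter_le _ _
    have hgNR : (g:ℝ) ≤ (N₀:ℝ) := by exact_mod_cast hgN
    have hglow' : (N₀:ℝ)/(64*(A.card:ℝ)) ≤ (g:ℝ) := by
      rw [hN₀]
      exact_mod_cast hglow
    set θ : ℝ := (1/256 : ℝ) / (A.card : ℝ) * s with hθdef
    have hθ0 : 0 ≤ θ := by positivity
    have hapos : (0:ℝ) < (A.card:ℝ) := by linarith
    -- bound 2^m by exp θ
    have c1 : (2:ℝ)^(Nat.floor θ) ≤ Real.exp θ := by
      have h1 : (2:ℝ)^(Nat.floor θ) ≤ Real.exp 1 ^ (Nat.floor θ) := by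
        apply pow_le_pow_left₀ (by norm_num)
        have := Real.add_one_le_exp (1:ℝ)
        linarith
      have h2 : Real.exp 1 ^ (Nat.floor θ) = Real.exp (Nat.floor θ) := by
        rw [← Real.exp_nat_mul, mul_one]
      have h3 : Real.exp ((Nat.floor θ : ℝ)) ≤ Real.exp θ :=
        Real.exp_le_exp.2 (Nat.floor_le hθ0)
      linarith
    -- bound the base
    have c2 : (N₀:ℝ) - (g:ℝ)/2 ≤ (N₀:ℝ) * Real.exp (-(1/(128*(A.card:ℝ)))) := by
      have h1 : (N₀:ℝ) * (1 - 1/(128*(A.card:ℝ))) = (N₀:ℝ) - ((N₀:ℝ)/(64*(A.card:ℝ)))/2 := by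
        field_simp
        ring
      have h2 : (1:ℝ) - 1/(128*(A.card:ℝ)) ≤ Real.exp (-(1/(128*(A.card:ℝ)))) := by
        have := Real.add_one_le_exp (-(1/(128*(A.card:ℝ))))
        linarith
      have h3 : (N₀:ℝ) * (1 - 1/(128*(A.card:ℝ))) ≤ (N₀:ℝ) * Real.exp (-(1/(128*(A.card:ℝ)))) := by
        apply mul_le_mul_of_nonneg_left h2 (by positivity)
      linarith
    have c3 : (0:ℝ) ≤ (N₀:ℝ) - (g:ℝ)/2 := by linarith
    have c4 : ((N₀:ℝ) - (g:ℝ)/2)^s ≤ (N₀:ℝ)^s * Real.exp (-(s:ℝ)/(128*(A.card:ℝ))) := by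
      have h1 : ((N₀:ℝ) - (g:ℝ)/2)^s ≤ ((N₀:ℝ) * Real.exp (-(1/(128*(A.card:ℝ)))))^s :=
        pow_le_pow_left₀ c3 c2 s
      have h2 : ((N₀:ℝ) * Real.exp (-(1/(128*(A.card:ℝ)))))^s
          = (N₀:ℝ)^s * Real.exp (-(s:ℝ)/(128*(A.card:ℝ))) := by
        rw [mul_pow, ← Real.exp_nat_mul]
        congr 2
        field_simp
      rw [h2] at h1
      exact h1
    -- combine
    have c5 : ((Bad (j, A, v)).card : ℝ)
        ≤ Real.exp θ * ((N₀:ℝ)^s * Real.exp (-(s:ℝ)/(128*(A.card:ℝ)))) := by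
      have hb : ((Bad (j, A, v)).card : ℝ)
          ≤ 2^(Nat.floor θ) * ((N₀:ℝ) - (g:ℝ)/2)^s := htb
      have h1 : (2:ℝ)^(Nat.floor θ) * ((N₀:ℝ) - (g:ℝ)/2)^s
          ≤ Real.exp θ * ((N₀:ℝ)^s * Real.exp (-(s:ℝ)/(128*(A.card:ℝ)))) := by
        apply mul_le_mul c1 c4 (by positivity) (by positivity)
      linarith
    have c6 : Real.exp θ * Real.exp (-(s:ℝ)/(128*(A.card:ℝ)))
        ≤ Real.exp (-(s:ℝ)/(256*k)) := by
      rw [← Real.exp_add]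
      apply Real.exp_le_exp.2
      have he1 : θ + (-(s:ℝ)/(128*(A.card:ℝ))) = -(s:ℝ)/(256*(A.card:ℝ)) := by
        rw [hθdef]
        field_simp
        ring
      rw [he1]
      rw [neg_div, neg_div, neg_le_neg_iff]
      apply div_le_div_of_nonneg_left (by positivity) (by positivity)
      linarith
    calc ((Bad (j, A, v)).card : ℝ)
        ≤ Real.exp θ * ((N₀:ℝ)^s * Real.exp (-(s:ℝ)/(128*(A.card:ℝ)))) := c5
      _ = (N₀:ℝ)^s * (Real.exp θ * Real.exp (-(s:ℝ)/(128*(A.card:ℝ)))) := by ring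
      _ ≤ (N₀:ℝ)^s * Real.exp (-(s:ℝ)/(256*k)) := by
          apply mul_le_mul_of_nonneg_left c6 (by positivity)
  -- Step B : there are few events
  have stepB : E.card ≤ n^(4*k) := by
    have hsub : E ⊆ (Finset.range (k+1)) ×ˢ
        (((Finset.range (k+1)).biUnion
            (fun r => Finset.powersetCard r (univ : Finset (Fin n)))) ×ˢ
          (univ : Finset (Fin n))) := by
      rintro ⟨j, A, v⟩ he
      rw [hE, Finset.mem_filter] at he
      obtain ⟨hmem, hbb, h2j, hja, haj, hv⟩ := he
      replace h2j : 2*j ≤ k := h2j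
      replace haj : A.card ≤ 2*j := haj
      rw [Finset.mem_product] at hmem
      rw [Finset.mem_product, Finset.mem_product]
      refine ⟨hmem.1, ?_, Finset.mem_univ _⟩
      rw [Finset.mem_biUnion]
      refine ⟨A.card, ?_, ?_⟩
      · rw [Finset.mem_range]
        omega
      · rw [Finset.mem_powersetCard_univ]
        
    have h1 := Finset.card_le_card hsub
    rw [Finset.card_product, Finset.card_product, Finset.card_range, Finset.card_univ,
      Fintype.card_fin] at h1
    have h2 : ((Finset.range (k+1)).biUnion
        (fun r => Finset.powersetCard r (univ : Finset (Fin n)))).card ≤ (k+1) * n^k := by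
      calc ((Finset.range (k+1)).biUnion
          (fun r => Finset.powersetCard r (univ : Finset (Fin n)))).card
          ≤ ∑ r ∈ Finset.range (k+1), (Finset.powersetCard r (univ : Finset (Fin n))).card :=
            Finset.card_biUnion_le
        _ ≤ ∑ _r ∈ Finset.range (k+1), n^k := by
            apply Finset.sum_le_sum
            intro r hr
            rw [Finset.card_powersetCard, Finset.card_univ, Fintype.card_fin]
            calc n.choose r ≤ n^r := Nat.choose_le_pow n r
              _ ≤ n^k := Nat.pow_le_pow_right (by omega) (by
                  rw [Finset.mem_range] at hr; omega)
        _ = (k+1) * n^k := by rw [Finset.sum_const, Finset.card_range, smul_eq_mul]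
    have hk1n : k + 1 ≤ n^k := by
      calc k + 1 ≤ 2^k := Nat.lt_two_pow_self (n := k)
        _ ≤ n^k := Nat.pow_le_pow_left hn2 k
    calc E.card ≤ (k+1) * (((Finset.range (k+1)).biUnion
          (fun r => Finset.powersetCard r (univ : Finset (Fin n)))).card * n) := h1
      _ ≤ (k+1) * (((k+1) * n^k) * n) := by
          apply Nat.mul_le_mul_left
          exact Nat.mul_le_mul_right _ h2
      _ ≤ n^k * ((n^k * n^k) * n) := by
          apply Nat.mul_le_mul hk1n
          exact Nat.mul_le_mul_right _ (Nat.mul_le_mul_right _ hk1n)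
      _ = n^(3*k+1) := by ring
      _ ≤ n^(4*k) := Nat.pow_le_pow_right (by omega) (by omega)
  -- Step C : a good ω exists
  have hlogn : 0 < Real.log n := Real.log_pos (by exact_mod_cast hn2)
  have hkR : (2:ℝ) ≤ (k:ℝ) := by exact_mod_cast hk2
  have hsR : (0:ℝ) ≤ (s:ℝ) := by positivity
  have hlt : (n:ℝ)^(4*k) * Real.exp (-(s:ℝ)/(256*k)) < 1 := by
    have h1 : (n:ℝ)^(4*k) = Real.exp (((4*k : ℕ):ℝ) * Real.log n) := by
      rw [Real.exp_nat_mul, Real.exp_log (by positivity)]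
    have h2 : ((4*k : ℕ):ℝ) * Real.log n < (s:ℝ)/(256*k) := by
      rw [lt_div_iff₀ (by positivity)]
      push_cast
      nlinarith [mul_pos (mul_pos (by linarith : (0:ℝ) < (k:ℝ)) (by linarith : (0:ℝ) < (k:ℝ))) hlogn]
    rw [h1, ← Real.exp_add]
    have h3 : ((4*k : ℕ):ℝ) * Real.log n + (-(s:ℝ)/(256*k)) < 0 := by
      rw [neg_div]
      linarith
    calc Real.exp (((4*k : ℕ):ℝ) * Real.log n + (-(s:ℝ)/(256*k))) < Real.exp 0 :=
        Real.exp_lt_exp.2 h3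
      _ = 1 := Real.exp_zero
  have hfewbad : ((E.biUnion Bad).card : ℝ) < ((N₀:ℝ))^s := by
    have h0 : ((E.biUnion Bad).card : ℝ) ≤ ∑ e ∈ E, ((Bad e).card : ℝ) := by
      have := Finset.card_biUnion_le (s := E) (t := Bad)
      calc ((E.biUnion Bad).card : ℝ) ≤ ((∑ e ∈ E, (Bad e).card : ℕ) : ℝ) := by
            exact_mod_cast this
        _ = ∑ e ∈ E, ((Bad e).card : ℝ) := by push_cast; rfl
    have hEnR : (E.card : ℝ) ≤ (n:ℝ)^(4*k) := by exact_mod_cast stepB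
    calc ((E.biUnion Bad).card : ℝ) ≤ ∑ e ∈ E, ((Bad e).card : ℝ) := h0
      _ ≤ ∑ _e ∈ E, (N₀:ℝ)^s * Real.exp (-(s:ℝ)/(256*k)) := Finset.sum_le_sum stepA
      _ = (E.card : ℝ) * ((N₀:ℝ)^s * Real.exp (-(s:ℝ)/(256*k))) := by
          rw [Finset.sum_const, nsmul_eq_mul]
      _ ≤ (n:ℝ)^(4*k) * ((N₀:ℝ)^s * Real.exp (-(s:ℝ)/(256*k))) := by
          apply mul_le_mul_of_nonneg_right hEnR (by positivity)
      _ = ((n:ℝ)^(4*k) * Real.exp (-(s:ℝ)/(256*k))) * (N₀:ℝ)^s := by ring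
      _ < 1 * (N₀:ℝ)^s := by
          apply mul_lt_mul_of_pos_right hlt
          have : (0:ℝ) < (N₀:ℝ) := by exact_mod_cast hN₀pos
          positivity
      _ = (N₀:ℝ)^s := one_mul _
  obtain ⟨ω, hω⟩ : ∃ ω : Fin s → Fin n → Fin (16*k), ω ∉ E.biUnion Bad := by
    by_contra h
    push_neg at h
    have hsub : (univ : Finset (Fin s → Fin n → Fin (16*k))) ⊆ E.biUnion Bad :=
      fun x _ => h x
    have hcard := Finset.card_le_card hsub
    rw [Finset.card_univ] at hcard
    have hNs : Fintype.card (Fin s → Fin n → Fin (16*k)) = N₀^s := by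
      rw [Fintype.card_fun, Fintype.card_fin, hN₀def]
    rw [hNs] at hcard
    have : ((N₀:ℝ))^s ≤ ((E.biUnion Bad).card : ℝ) := by exact_mod_cast hcard
    linarith
  -- Step D : construct the family
  refine ⟨fun i' j' => if h : i' < s then
      (univ : Finset (Fin n)).filter (fun w =>
        2*k - 2*(k/j') ≤ ((ω ⟨i', h⟩) w).val ∧ ((ω ⟨i', h⟩) w).val < 2*k - k/j')
    else ∅, ?_⟩
  rintro j ⟨b, hjb⟩ h2j A hja haj v hv
  have hj1 : 1 ≤ j := hjb ▸ Nat.one_le_two_pow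
  have ha1 : 1 ≤ A.card := Finset.card_pos.2 ⟨v, hv⟩
  have heE : (j, A, v) ∈ E := by
    rw [hE, Finset.mem_filter, Finset.mem_product, Finset.mem_product]
    exact ⟨⟨Finset.mem_range.2 (by omega), Finset.mem_univ _, Finset.mem_univ _⟩,
      ⟨b, hjb⟩, h2j, hja, haj, hv⟩
  have hωBad : ω ∉ Bad (j, A, v) := fun hc => hω (Finset.mem_biUnion.2 ⟨_, heE, hc⟩)
  -- useful arithmetic facts about the dyadic intervals
  have hbt : b + 1 ≤ t := by
    have h1 : (2:ℕ)^(b+1) ≤ 2^t := by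
      rw [pow_succ]
      omega
    exact (Nat.pow_le_pow_iff_right (by norm_num)).1 h1
  have hd1 : 1 ≤ k / j := by
    rw [hjb, hkt, Nat.pow_div (by omega) (by norm_num)]
    exact Nat.one_le_two_pow
  have hdd : k / (2*j) ≤ k / j := Nat.div_le_div_left (by omega) (by omega)
  have hd2 : 1 ≤ k / (2*j) := by
    have h1 : 2*j = 2^(b+1) := by rw [hjb, pow_succ]; ring
    rw [h1, hkt, Nat.pow_div (by omega) (by norm_num)]
    exact Nat.one_le_two_pow
  have hhalf : j ≠ 1 → k / (j/2) = 2 * (k/j) ∧ 1 ≤ k/j := by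
    intro hj1'
    have hb1 : 1 ≤ b := by
      rcases Nat.eq_zero_or_pos b with h | h
      · exfalso; rw [h, pow_zero] at hjb; exact hj1' hjb
      · exact h
    have hj2 : j / 2 = 2^(b-1) := by
      rw [hjb]
      rw [show (2:ℕ)^b = 2^(b-1) * 2 by rw [← pow_succ]; congr 1; omega]
      exact Nat.mul_div_cancel _ (by norm_num)
    constructor
    · rw [hj2, hkt, hjb, Nat.pow_div (by omega) (by norm_num),
        Nat.pow_div (by omega) (by norm_num)]
      rw [show t - (b-1) = (t-b) + 1 by omega, pow_succ]
      ring
    · exact hd1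
  -- the count of good indices is large
  set X := ((univ : Finset (Fin s)).filter
      (fun i => (2*k - 2*(k/j) ≤ ((ω i) v).val ∧ ((ω i) v).val < 2*k - k/j) ∧
        ∀ u ∈ A, u ≠ v → ¬(2*k - 4*(k/j) ≤ ((ω i) u).val ∧ ((ω i) u).val < 2*k))).card
    with hXdef
  have hXlarge : Nat.floor ((1/256 : ℝ) / (A.card : ℝ) * s) < X := by
    by_contra hc
    push_neg at hc
    apply hωBad
    rw [hBad, Finset.mem_filter]
    refine ⟨Finset.mem_univ _, ?_⟩
    exact hc
  -- X is at most the count in the goal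
  have hinj : X ≤ ((Finset.range s).filter (fun i =>
      v ∈ (fun i' j' => if h : i' < s then
        (univ : Finset (Fin n)).filter (fun w =>
          2*k - 2*(k/j') ≤ ((ω ⟨i', h⟩) w).val ∧ ((ω ⟨i', h⟩) w).val < 2*k - k/j')
      else ∅) i j ∧
      A ∩ ((if j = 1 then (∅ : Finset (Fin n)) else (fun i' j' => if h : i' < s then
        (univ : Finset (Fin n)).filter (fun w =>
          2*k - 2*(k/j') ≤ ((ω ⟨i', h⟩) w).val ∧ ((ω ⟨i', h⟩) w).val < 2*k - k/j')
      else ∅) i (j / 2)) ∪ (fun i' j' => if h : i' < s then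
        (univ : Finset (Fin n)).filter (fun w =>
          2*k - 2*(k/j') ≤ ((ω ⟨i', h⟩) w).val ∧ ((ω ⟨i', h⟩) w).val < 2*k - k/j')
      else ∅) i j ∪ (fun i' j' => if h : i' < s then
        (univ : Finset (Fin n)).filter (fun w =>
          2*k - 2*(k/j') ≤ ((ω ⟨i', h⟩) w).val ∧ ((ω ⟨i', h⟩) w).val < 2*k - k/j')
      else ∅) i (2 * j)) = {v})).card := by
    rw [hXdef]
    apply Finset.card_le_card_of_injOn (fun (i : Fin s) => (i : ℕ))
    · intro i hi
      rw [Finset.mem_coe, Finset.mem_filter] at hi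
      obtain ⟨-, hgood⟩ := hi
      have hiv : (i : ℕ) < s := i.isLt
      rw [Finset.mem_coe, Finset.mem_filter]
      refine ⟨Finset.mem_range.2 hiv, ?_, ?_⟩
      · simp only [dif_pos hiv]
        rw [Finset.mem_filter]
        exact ⟨Finset.mem_univ _, by simpa using hgood.1⟩
      · apply Finset.eq_singleton_iff_unique_mem.2
        constructor
        · refine Finset.mem_inter.2 ⟨hv, ?_⟩
          apply Finset.mem_union_left
          apply Finset.mem_union_right
          simp only [dif_pos hiv]
          rw [Finset.mem_filter]
          exact ⟨Finset.mem_univ _, by simpa using hgood.1⟩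
        · intro u hu
          by_contra hne
          rw [Finset.mem_inter] at hu
          obtain ⟨huA, humem⟩ := hu
          have hexcl := hgood.2 u huA hne
          rw [Finset.mem_union, Finset.mem_union] at humem
          rcases humem with (hm | hm) | hm
          · by_cases hj1' : j = 1
            · rw [if_pos hj1'] at hm
              exact absurd hm (Finset.notMem_empty u)
            · rw [if_neg hj1'] at hm
              simp only [dif_pos hiv] at hm
              rw [Finset.mem_filter] at hm
              obtain ⟨hh1, hh2⟩ := (hhalf hj1')
              have hm' := hm.2
              simp only [Fin.eta] at hm'
              rw [hh1] at hm'
              exact hexcl (by omega)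
          · simp only [dif_pos hiv] at hm
            rw [Finset.mem_filter] at hm
            have hm' := hm.2
            simp only [Fin.eta] at hm'
            exact hexcl (by omega)
          · simp only [dif_pos hiv] at hm
            rw [Finset.mem_filter] at hm
            have hm' := hm.2
            simp only [Fin.eta] at hm'
            exact hexcl (by omega)
    · intro i _ i' _ hii
      exact Fin.val_injective hii
  have hfloor : (1/256 : ℝ) / (A.card : ℝ) * s
      < (Nat.floor ((1/256 : ℝ) / (A.card : ℝ) * s) : ℝ) + 1 :=
    Nat.lt_floor_add_one _
  have hXR : ((Nat.floor ((1/256 : ℝ) / (A.card : ℝ) * s) : ℝ) + 1) ≤ (X:ℝ) := by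
    exact_mod_cast hXlarge
  have hcountR : (X:ℝ) ≤ _ := Nat.cast_le.2 hinj
  linarith
end
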